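/- Let (D, B_0) be a dimaze that defines a matroid and contains no subdivision of an outgoing comb. Let Q be a linkage from S onto T ⊆ B_0 such that S cannot be linked to any proper subset of T. Then M_L(D, B_0) = M_L(D_1, B_1), where (D_1, B_1) is the Q-shifted dimaze with B_1 = (B_0 \ T) ∪ S. -/

import Mathlib

open Set


/-- A finite directed path/walk or a ray, encoded by a vertex function and a length:
the number of edges, `⊤` for a ray. Only indices `≤ len` are meaningful. -/
structure DiWalk (V : Type*) where
  vtx : ℕ → V
  len : ℕ∞

namespace DiWalk

variable {V : Type*} (w : DiWalk V)

/-- The vertices of the walk. -/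
def support : Set V := {v | ∃ i : ℕ, (i : ℕ∞) ≤ w.len ∧ w.vtx i = v}

/-- The directed edges of the walk. -/
def edges : Set (V × V) := {e | ∃ i : ℕ, (i : ℕ∞) + 1 ≤ w.len ∧ e = (w.vtx i, w.vtx (i + 1))}

/-- The initial vertex. -/
def Ini : V := w.vtx 0

/-- The terminal vertex (meaningful for finite walks). -/
def Ter : V := w.vtx w.len.toNat

/-- `w` is a ray, i.e. one-way infinite. -/
def IsRay : Prop := w.len = ⊤

/-- `w` is a (finite) directed path or a directed ray in the digraph `D`: consecutive
vertices are joined by edges of `D` and no vertex is repeated. -/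
def IsPathIn (D : V → V → Prop) : Prop :=
  (∀ i : ℕ, (i : ℕ∞) + 1 ≤ w.len → D (w.vtx i) (w.vtx (i + 1))) ∧
  (∀ i j : ℕ, (i : ℕ∞) ≤ w.len → (j : ℕ∞) ≤ w.len → w.vtx i = w.vtx j → i = j)

end DiWalk

variable {V : Type*}

/-- The vertex set of a family of walks. -/
def VSet (Q : Set (DiWalk V)) : Set V := ⋃ q ∈ Q, q.support

/-- The edge set of a family of walks. -/
def ESet (Q : Set (DiWalk V)) : Set (V × V) := ⋃ q ∈ Q, q.edges

/-- The set of initial vertices of a family of walks. -/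
def IniSet (Q : Set (DiWalk V)) : Set V := DiWalk.Ini '' Q

/-- The set of terminal vertices of the finite members of a family of walks. -/
def TerSet (Q : Set (DiWalk V)) : Set V := {v | ∃ q ∈ Q, ¬ q.IsRay ∧ q.Ter = v}

/-- The members of `Q` are pairwise vertex-disjoint. -/
def PairwiseDisjointWalks (Q : Set (DiWalk V)) : Prop :=
  ∀ p ∈ Q, ∀ q ∈ Q, p ≠ q → Disjoint p.support q.support

/-- `Q` is a set of pairwise disjoint directed paths or rays in `D`. -/
def IsPathSystem (D : V → V → Prop) (Q : Set (DiWalk V)) : Prop :=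
  (∀ q ∈ Q, q.IsPathIn D) ∧ PairwiseDisjointWalks Q

/-- A linkage in the dimaze `(D, B0)`: a set of pairwise disjoint finite directed paths
ending in `B0`. -/
def IsLinkage (D : V → V → Prop) (B0 : Set V) (Q : Set (DiWalk V)) : Prop :=
  IsPathSystem D Q ∧ ∀ q ∈ Q, ¬ q.IsRay ∧ q.Ter ∈ B0

/-- `I` is linkable to `B0` in `(D, B0)`. -/
def Linkable (D : V → V → Prop) (B0 : Set V) (I : Set V) : Prop :=
  ∃ Q, IsLinkage D B0 Q ∧ IniSet Q = I

/-- `I` is linkable onto `B0`: some linkage from `I` has terminal vertex set exactly `B0`. -/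
def LinkableOnto (D : V → V → Prop) (B0 : Set V) (I : Set V) : Prop :=
  ∃ Q, IsLinkage D B0 Q ∧ IniSet Q = I ∧ TerSet Q = B0

/-- `B0` is a set of sinks of `D`. -/
def IsDimaze (D : V → V → Prop) (B0 : Set V) : Prop := ∀ b ∈ B0, ∀ v, ¬ D b v

/-- `v` is the centre of a linking fan: infinitely many non-trivial directed paths to `B0`
from `v`, pairwise meeting only in `v`. -/
def IsFanCentre (D : V → V → Prop) (B0 : Set V) (v : V) : Prop :=
  ∃ P : Set (DiWalk V), P.Infinite ∧
    (∀ p ∈ P, p.IsPathIn D ∧ ¬ p.IsRay ∧ 1 ≤ p.len ∧ p.Ini = v ∧ p.Ter ∈ B0) ∧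
    (∀ p ∈ P, ∀ q ∈ P, p ≠ q → p.support ∩ q.support ⊆ {v})

/-- The ray `R` is the spine of an outgoing comb with teeth ending in `B0`: there are
infinitely many pairwise disjoint non-trivial paths from distinct vertices of `R` to `B0`,
each meeting `R` exactly in its initial vertex. -/
def IsSpine (D : V → V → Prop) (B0 : Set V) (R : DiWalk V) : Prop :=
  R.IsPathIn D ∧ R.IsRay ∧
  ∃ P : Set (DiWalk V), P.Infinite ∧
    (∀ p ∈ P, p.IsPathIn D ∧ ¬ p.IsRay ∧ 1 ≤ p.len ∧ p.Ini ∈ R.support ∧ p.Ter ∈ B0 ∧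
      p.support ∩ R.support = {p.Ini}) ∧
    PairwiseDisjointWalks P

/-- `(D, B0)` contains no subdivision of an outgoing comb. -/
def COFree (D : V → V → Prop) (B0 : Set V) : Prop := ¬ ∃ R, IsSpine D B0 R

/-- `(D, B0)` contains no subdivision of a linking fan. -/
def FanFree (D : V → V → Prop) (B0 : Set V) : Prop := ¬ ∃ v, IsFanCentre D B0 v

/-- A topological path in `(D, B0)`. -/
def IsTopPath (D : V → V → Prop) (B0 : Set V) (w : DiWalk V) : Prop :=
  w.IsPathIn D ∧
    ((¬ w.IsRay ∧ w.Ter ∈ B0) ∨ (¬ w.IsRay ∧ IsFanCentre D B0 w.Ter) ∨ IsSpine D B0 w)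

/-- `I` is topologically linkable in `(D, B0)`. -/
def TopLinkable (D : V → V → Prop) (B0 : Set V) (I : Set V) : Prop :=
  ∃ Q : Set (DiWalk V), (∀ q ∈ Q, IsTopPath D B0 q) ∧ PairwiseDisjointWalks Q ∧ IniSet Q = I

/-- The digraph of the `Q`-shifted dimaze: every edge of `Q` is reversed, and every other
edge `(v, u)` is replaced by `(Q⃗(v), u)`, where `Q⃗(v)` is `v` if `v ∉ V(Q)` and otherwise
the successor of `v` on its path in `Q`. -/
def shiftedDigraph {V : Type*} (D : V → V → Prop) (EQ : Set (V × V)) (VQ : Set V) :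
    V → V → Prop :=
  fun a u => (u, a) ∈ EQ ∨ ∃ v, D v u ∧ (v, u) ∉ EQ ∧ ((v ∉ VQ ∧ a = v) ∨ (v, a) ∈ EQ)

namespace Shift

open Classical DiWalk

variable {V : Type*}

/-! ### Basic DiWalk lemmas -/

lemma notRay_iff {w : DiWalk V} : ¬ w.IsRay ↔ w.len ≠ ⊤ := Iff.rfl

lemma len_coe {w : DiWalk V} (h : ¬ w.IsRay) : ((w.len.toNat : ℕ∞)) = w.len :=
  ENat.coe_toNat h

lemma mem_support_iff {w : DiWalk V} {v : V} :
    v ∈ w.support ↔ ∃ i : ℕ, (i : ℕ∞) ≤ w.len ∧ w.vtx i = v := Iff.rfl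

lemma vtx_mem_support {w : DiWalk V} {i : ℕ} (h : (i : ℕ∞) ≤ w.len) :
    w.vtx i ∈ w.support := ⟨i, h, rfl⟩

lemma Ini_mem_support (w : DiWalk V) : w.Ini ∈ w.support :=
  ⟨0, by simp, rfl⟩

lemma Ter_mem_support {w : DiWalk V} (h : ¬ w.IsRay) : w.Ter ∈ w.support :=
  ⟨w.len.toNat, by rw [len_coe h], rfl⟩

lemma support_finite {w : DiWalk V} (h : ¬ w.IsRay) : w.support.Finite := by
  have : w.support ⊆ w.vtx '' (Set.Iic w.len.toNat) := by
    rintro v ⟨i, hi, rfl⟩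
    exact ⟨i, by rw [← len_coe h, Nat.cast_le] at hi; exact hi, rfl⟩
  exact Set.Finite.subset ((Set.finite_Iic _).image _) this

lemma support_nonempty (w : DiWalk V) : w.support.Nonempty := ⟨w.Ini, Ini_mem_support w⟩

lemma cast_succ_le {i : ℕ} {n : ℕ∞} (h : (i : ℕ∞) + 1 ≤ n) : ((i+1 : ℕ) : ℕ∞) ≤ n := by
  push_cast; exact h

lemma cast_le_of_succ {i : ℕ} {n : ℕ∞} (h : (i : ℕ∞) + 1 ≤ n) : (i : ℕ∞) ≤ n :=
  le_trans (le_add_right le_rfl) h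

lemma mem_ESet_iff {Q : Set (DiWalk V)} {e : V × V} :
    e ∈ ESet Q ↔ ∃ q ∈ Q, ∃ i : ℕ, (i : ℕ∞) + 1 ≤ q.len ∧ e = (q.vtx i, q.vtx (i + 1)) := by
  simp [ESet, DiWalk.edges]

lemma mem_VSet_iff {Q : Set (DiWalk V)} {v : V} : v ∈ VSet Q ↔ ∃ q ∈ Q, v ∈ q.support := by
  simp [VSet]

/-- Walks in a pairwise disjoint family sharing a vertex are equal. -/
lemma eq_of_mem_support {P : Set (DiWalk V)} (hd : PairwiseDisjointWalks P)
    {p q : DiWalk V} (hp : p ∈ P) (hq : q ∈ P) {v : V}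
    (hvp : v ∈ p.support) (hvq : v ∈ q.support) : p = q := by
  by_contra hne
  exact (hd p hp q hq hne).ne_of_mem hvp hvq rfl

/-- Unique position: a vertex appears at a unique (walk, index) pair in a path system. -/
lemma posUnique {D : V → V → Prop} {P : Set (DiWalk V)}
    (hP : ∀ q ∈ P, q.IsPathIn D) (hd : PairwiseDisjointWalks P)
    {p q : DiWalk V} (hp : p ∈ P) (hq : q ∈ P) {i j : ℕ}
    (hi : (i : ℕ∞) ≤ p.len) (hj : (j : ℕ∞) ≤ q.len)
    (he : p.vtx i = q.vtx j) : p = q ∧ i = j := by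
  have hpq : p = q := eq_of_mem_support hd hp hq (vtx_mem_support hi) (he ▸ vtx_mem_support hj)
  subst hpq
  exact ⟨rfl, (hP p hp).2 i j hi hj he⟩

/-! ### Structure of a linkage `Q` -/

section QStruct

variable {D : V → V → Prop} {B0 : Set V} {Q : Set (DiWalk V)}

lemma q_notRay (hQ : IsLinkage D B0 Q) {q : DiWalk V} (hq : q ∈ Q) : ¬ q.IsRay :=
  (hQ.2 q hq).1

lemma q_len (hQ : IsLinkage D B0 Q) {q : DiWalk V} (hq : q ∈ Q) :
    q.len = (q.len.toNat : ℕ∞) := (len_coe (q_notRay hQ hq)).symm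

lemma q_Ter_mem_B0 (hQ : IsLinkage D B0 Q) {q : DiWalk V} (hq : q ∈ Q) : q.Ter ∈ B0 :=
  (hQ.2 q hq).2

lemma EQ_sub_D (hQ : IsLinkage D B0 Q) {a b : V} (h : (a, b) ∈ ESet Q) : D a b := by
  rw [mem_ESet_iff] at h
  obtain ⟨q, hq, i, hi, he⟩ := h
  simp only [Prod.mk.injEq] at he
  obtain ⟨rfl, rfl⟩ := he
  exact (hQ.1.1 q hq).1 i hi

lemma EQ_tail_VQ {a b : V} (h : (a, b) ∈ ESet Q) : a ∈ VSet Q := by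
  rw [mem_ESet_iff] at h
  obtain ⟨q, hq, i, hi, he⟩ := h
  simp only [Prod.mk.injEq] at he
  obtain ⟨rfl, rfl⟩ := he
  exact mem_VSet_iff.2 ⟨q, hq, vtx_mem_support (cast_le_of_succ hi)⟩

lemma EQ_head_VQ {a b : V} (h : (a, b) ∈ ESet Q) : b ∈ VSet Q := by
  rw [mem_ESet_iff] at h
  obtain ⟨q, hq, i, hi, he⟩ := h
  simp only [Prod.mk.injEq] at he
  obtain ⟨rfl, rfl⟩ := he
  exact mem_VSet_iff.2 ⟨q, hq, vtx_mem_support (cast_succ_le hi)⟩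

lemma EQ_funTail (hQ : IsLinkage D B0 Q) {a b b' : V}
    (h : (a, b) ∈ ESet Q) (h' : (a, b') ∈ ESet Q) : b = b' := by
  rw [mem_ESet_iff] at h h'
  obtain ⟨q, hq, i, hi, he⟩ := h
  obtain ⟨q', hq', i', hi', he'⟩ := h'
  simp only [Prod.mk.injEq] at he he'
  obtain ⟨rfl, rfl⟩ := he
  obtain ⟨h1', rfl⟩ := he'
  obtain ⟨rfl, rfl⟩ := posUnique hQ.1.1 hQ.1.2 hq hq' (cast_le_of_succ hi)
    (cast_le_of_succ hi') h1'
  rfl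

lemma EQ_funHead (hQ : IsLinkage D B0 Q) {a a' b : V}
    (h : (a, b) ∈ ESet Q) (h' : (a', b) ∈ ESet Q) : a = a' := by
  rw [mem_ESet_iff] at h h'
  obtain ⟨q, hq, i, hi, he⟩ := h
  obtain ⟨q', hq', i', hi', he'⟩ := h'
  simp only [Prod.mk.injEq] at he he'
  obtain ⟨rfl, rfl⟩ := he
  obtain ⟨rfl, h2'⟩ := he'
  obtain ⟨rfl, hii⟩ := posUnique hQ.1.1 hQ.1.2 hq hq' (cast_succ_le hi)
    (cast_succ_le hi') h2'
  obtain rfl : i = i' := by omega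
  rfl

lemma EQ_head_ne_ini (hQ : IsLinkage D B0 Q) {a b : V} (h : (a, b) ∈ ESet Q) :
    b ∉ IniSet Q := by
  rw [mem_ESet_iff] at h
  obtain ⟨q, hq, i, hi, he⟩ := h
  simp only [Prod.mk.injEq] at he
  obtain ⟨rfl, rfl⟩ := he
  rintro ⟨q', hq', hq'e⟩
  obtain ⟨rfl, hii⟩ := posUnique hQ.1.1 hQ.1.2 hq' hq
    (by simp : ((0:ℕ) : ℕ∞) ≤ q'.len) (cast_succ_le hi) hq'e
  omega

lemma Ini_sub_VQ : IniSet Q ⊆ VSet Q := by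
  rintro v ⟨q, hq, rfl⟩
  exact mem_VSet_iff.2 ⟨q, hq, Ini_mem_support q⟩

lemma TerSet_sub_B0 (hQ : IsLinkage D B0 Q) : TerSet Q ⊆ B0 := by
  rintro v ⟨q, hq, _, rfl⟩
  exact q_Ter_mem_B0 hQ hq

lemma Ter_sub_VQ : TerSet Q ⊆ VSet Q := by
  rintro v ⟨q, hq, hnr, rfl⟩
  exact mem_VSet_iff.2 ⟨q, hq, Ter_mem_support hnr⟩

/-- Vertices of `Q` in `B0` are terminal. -/
lemma VQ_B0_sub_T (hDim : IsDimaze D B0) (hQ : IsLinkage D B0 Q) {v : V}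
    (hv : v ∈ VSet Q) (hb : v ∈ B0) : v ∈ TerSet Q := by
  obtain ⟨q, hq, i, hi, rfl⟩ := mem_VSet_iff.1 hv
  rw [q_len hQ hq, Nat.cast_le] at hi
  rcases eq_or_lt_of_le hi with h | h
  · exact ⟨q, hq, q_notRay hQ hq, by rw [DiWalk.Ter, ← h]⟩
  · exfalso
    refine hDim _ hb (q.vtx (i+1)) ?_
    refine (hQ.1.1 q hq).1 i ?_
    rw [q_len hQ hq]
    exact_mod_cast h

/-- A vertex of `Q` that is not terminal has a successor. -/
lemma exists_succ (hQ : IsLinkage D B0 Q) {v : V} (hv : v ∈ VSet Q)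
    (hnt : v ∉ TerSet Q) : ∃ u, (v, u) ∈ ESet Q := by
  obtain ⟨q, hq, i, hi, rfl⟩ := mem_VSet_iff.1 hv
  rw [q_len hQ hq, Nat.cast_le] at hi
  rcases eq_or_lt_of_le hi with h | h
  · exact absurd ⟨q, hq, q_notRay hQ hq, by rw [DiWalk.Ter, ← h]⟩ hnt
  · refine ⟨q.vtx (i+1), mem_ESet_iff.2 ⟨q, hq, i, ?_, rfl⟩⟩
    rw [q_len hQ hq]
    exact_mod_cast h

end QStruct

end Shift
namespace Shift

/-! ### The composition of `Q` with a system of paths in the shifted dimaze -/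

/-- Bundle of data: a dimaze `(D, B0)`, a linkage `Q`, and a system `P1` of disjoint
paths/rays in the `Q`-shifted dimaze whose finite members end in the shifted exit set. -/
structure Comp (V : Type*) where
  D : V → V → Prop
  B0 : Set V
  Q : Set (DiWalk V)
  P1 : Set (DiWalk V)
  hDim : IsDimaze D B0
  hQ : IsLinkage D B0 Q
  hCO : COFree D B0
  hP1 : ∀ π ∈ P1, π.IsPathIn (shiftedDigraph D (ESet Q) (VSet Q))
  hP1d : PairwiseDisjointWalks P1
  hP1f : ∀ π ∈ P1, ¬ π.IsRay → π.Ter ∈ (B0 \ TerSet Q) ∪ IniSet Q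

namespace Comp

variable {V : Type*} (C : Comp V)

/-- A step of the system `P1`. -/
def Pstep (a u : V) : Prop :=
  ∃ π ∈ C.P1, ∃ j : ℕ, (j : ℕ∞) + 1 ≤ π.len ∧ π.vtx j = a ∧ π.vtx (j + 1) = u

def OutP (a : V) : Prop := ∃ u, C.Pstep a u

/-- A step of `P1` that traverses a reversed `Q`-edge. -/
def PstepI (a u : V) : Prop := C.Pstep a u ∧ (u, a) ∈ ESet C.Q

/-- A step of `P1` along a shifted `D`-edge. -/
def PstepII (a u : V) : Prop := C.Pstep a u ∧ (u, a) ∉ ESet C.Q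

/-- The interior of vertex `v` is available in the composed system. -/
def Internal (v : V) : Prop :=
  (v ∈ VSet C.Q ∧ ¬ ∃ a, C.PstepI a v) ∨ (v ∉ VSet C.Q ∧ C.OutP v)

/-- A new `D`-edge contributed by `P1` (pulled back through the shift). -/
def NewArc (x u : V) : Prop :=
  C.D x u ∧ (x, u) ∉ ESet C.Q ∧
    ∃ a, C.PstepII a u ∧ ((x ∉ VSet C.Q ∧ a = x) ∨ (x, a) ∈ ESet C.Q)

/-- The edges of the composed system. -/
def Arc (x u : V) : Prop := ((x, u) ∈ ESet C.Q ∧ ¬ C.OutP u) ∨ C.NewArc x u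

lemma Pstep.D1 {a u : V} (h : C.Pstep a u) :
    shiftedDigraph C.D (ESet C.Q) (VSet C.Q) a u := by
  obtain ⟨π, hπ, j, hj, ha, hu⟩ := h
  exact ha ▸ hu ▸ (C.hP1 π hπ).1 j hj

lemma Pstep_fun {a u u' : V} (h : C.Pstep a u) (h' : C.Pstep a u') : u = u' := by
  obtain ⟨π, hπ, j, hj, ha, hu⟩ := h
  obtain ⟨π', hπ', j', hj', ha', hu'⟩ := h'
  obtain ⟨rfl, rfl⟩ := posUnique C.hP1 C.hP1d hπ hπ' (cast_le_of_succ hj)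
    (cast_le_of_succ hj') (ha.trans ha'.symm)
  rw [← hu, ← hu']

lemma Pstep_inj {a a' u : V} (h : C.Pstep a u) (h' : C.Pstep a' u) : a = a' := by
  obtain ⟨π, hπ, j, hj, ha, hu⟩ := h
  obtain ⟨π', hπ', j', hj', ha', hu'⟩ := h'
  obtain ⟨rfl, hjj⟩ := posUnique C.hP1 C.hP1d hπ hπ' (cast_succ_le hj)
    (cast_succ_le hj') (hu.trans hu'.symm)
  obtain rfl : j = j' := by omega
  rw [← ha, ← ha']

lemma Pstep_irrefl {a : V} (h : C.Pstep a a) : False := by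
  obtain ⟨π, hπ, j, hj, ha, hu⟩ := h
  have := (C.hP1 π hπ).2 j (j+1) (cast_le_of_succ hj) (cast_succ_le hj) (ha.trans hu.symm)
  omega

/-- If `u` has a `P1`-step into it but none out of it, the member of `P1` through `u`
is finite and ends at `u`. -/
lemma pstep_end {a u : V} (h : C.Pstep a u) (hno : ¬ C.OutP u) :
    ∃ π ∈ C.P1, ¬ π.IsRay ∧ π.Ter = u := by
  obtain ⟨π, hπ, j, hj, ha, hu⟩ := h
  by_cases hr : π.IsRay
  · exact absurd ⟨π.vtx (j+2), π, hπ, j+1, by rw [hr]; exact le_top, hu, rfl⟩ hno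
  · refine ⟨π, hπ, hr, ?_⟩
    rw [← len_coe hr] at hj
    have hj2 : j + 1 ≤ π.len.toNat := by exact_mod_cast hj
    rcases eq_or_lt_of_le hj2 with hlt | hlt
    · rw [DiWalk.Ter, ← hlt, hu]
    · exact absurd ⟨π.vtx (j+2), π, hπ, j+1,
        by rw [← len_coe hr]; exact_mod_cast hlt, hu, rfl⟩ hno

/-- No `P1`-step enters an uncancelled `Q`-edge head. -/
lemma no_pstep_into_head {x a u : V} (hin : (x, u) ∈ ESet C.Q) (hno : ¬ C.OutP u)
    (h : C.Pstep a u) : False := by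
  obtain ⟨π, hπ, hr, hter⟩ := C.pstep_end h hno
  rcases C.hP1f π hπ hr with hb | hs
  · rw [hter] at hb
    exact hb.2 (VQ_B0_sub_T C.hDim C.hQ (EQ_head_VQ hin) hb.1)
  · exact EQ_head_ne_ini C.hQ hin (hter ▸ hs)

lemma arc_D {x u : V} (h : C.Arc x u) : C.D x u := by
  rcases h with ⟨h, _⟩ | ⟨h, _⟩
  · exact EQ_sub_D C.hQ h
  · exact h

lemma arc_fun {x u u' : V} (h : C.Arc x u) (h' : C.Arc x u') : u = u' := by
  rcases h with ⟨h1, h2⟩ | ⟨hD, hne, a, hst, hc⟩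
  · rcases h' with ⟨h1', _⟩ | ⟨hD', hne', a', hst', hc'⟩
    · exact EQ_funTail C.hQ h1 h1'
    · rcases hc' with ⟨hx, rfl⟩ | hxa'
      · exact absurd (EQ_tail_VQ h1) hx
      · obtain rfl := EQ_funTail C.hQ h1 hxa'
        exact absurd ⟨u', hst'.1⟩ h2
  · rcases h' with ⟨h1', h2'⟩ | ⟨hD', hne', a', hst', hc'⟩
    · rcases hc with ⟨hx, rfl⟩ | hxa
      · exact absurd (EQ_tail_VQ h1') hx
      · obtain rfl := EQ_funTail C.hQ h1' hxa
        exact absurd ⟨u, hst.1⟩ h2'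
    · rcases hc with ⟨hx, rfl⟩ | hxa
      · rcases hc' with ⟨hx', rfl⟩ | hxa'
        · exact C.Pstep_fun hst.1 hst'.1
        · exact absurd (EQ_tail_VQ hxa') hx
      · rcases hc' with ⟨hx', rfl⟩ | hxa'
        · exact absurd (EQ_tail_VQ hxa) hx'
        · obtain rfl := EQ_funTail C.hQ hxa hxa'
          exact C.Pstep_fun hst.1 hst'.1

lemma arc_inj {x x' u : V} (h : C.Arc x u) (h' : C.Arc x' u) : x = x' := by
  rcases h with ⟨h1, h2⟩ | ⟨hD, hne, a, hst, hc⟩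
  · rcases h' with ⟨h1', _⟩ | ⟨hD', hne', a', hst', hc'⟩
    · exact EQ_funHead C.hQ h1 h1'
    · exact absurd (C.no_pstep_into_head h1 h2 hst'.1) not_false
  · rcases h' with ⟨h1', h2'⟩ | ⟨hD', hne', a', hst', hc'⟩
    · exact absurd (C.no_pstep_into_head h1' h2' hst.1) not_false
    · obtain rfl := C.Pstep_inj hst.1 hst'.1
      rcases hc with ⟨hx, rfl⟩ | hxa
      · rcases hc' with ⟨hx', rfl⟩ | hxa'
        · rfl
        · exact absurd (EQ_head_VQ hxa') hx
      · rcases hc' with ⟨hx', rfl⟩ | hxa'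
        · exact absurd (EQ_head_VQ hxa) hx'
        · exact EQ_funHead C.hQ hxa hxa'

end Comp

end Shift
namespace Shift

namespace Comp

variable {V : Type*} (C : Comp V)

open Classical in
/-- The successor function of the composed system. -/
noncomputable def g (v : V) : Option V :=
  if h : C.Internal v ∧ ∃ u, C.Arc v u then some h.2.choose else none

lemma g_eq_some {v u : V} (h : C.g v = some u) : C.Internal v ∧ C.Arc v u := by
  unfold g at h
  split at h
  · next hh => cases h; exact ⟨hh.1, hh.2.choose_spec⟩
  · exact absurd h (by simp)

lemma g_eq_none {v : V} (hInt : C.Internal v → ¬ ∃ u, C.Arc v u) : C.g v = none := by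
  unfold g
  rw [dif_neg]
  rintro ⟨h1, h2⟩
  exact hInt h1 h2

lemma g_ne_none {v u : V} (hInt : C.Internal v) (h : C.Arc v u) : C.g v ≠ none := by
  unfold g
  rw [dif_pos ⟨hInt, u, h⟩]
  simp

/-- The trajectory from `a`. -/
noncomputable def o (a : V) : ℕ → Option V
  | 0 => some a
  | n+1 => (o a n).bind C.g

lemma o_succ_some {a u : V} {n : ℕ} :
    C.o a (n+1) = some u ↔ ∃ v, C.o a n = some v ∧ C.g v = some u :=
  Option.bind_eq_some_iff

/-- `a` is a source of the composed system. -/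
def NoIn (a : V) : Prop := ¬ ∃ x, C.Arc x a

lemma o_inj {a a' : V} (ha : C.NoIn a) (ha' : C.NoIn a') :
    ∀ i : ℕ, ∀ j : ℕ, ∀ v : V, C.o a i = some v → C.o a' j = some v → a = a' ∧ i = j := by
  intro i
  induction i with
  | zero =>
    intro j v h h'
    obtain rfl : a = v := by simpa [o] using h
    cases j with
    | zero => exact ⟨by simpa [o] using h'.symm, rfl⟩
    | succ m =>
      obtain ⟨w, _, hg⟩ := C.o_succ_some.1 h'
      exact absurd ⟨w, (C.g_eq_some hg).2⟩ ha
  | succ n ih =>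
    intro j v h h'
    cases j with
    | zero =>
      obtain rfl : a' = v := by simpa [o] using h'
      obtain ⟨w, _, hg⟩ := C.o_succ_some.1 h
      exact absurd ⟨w, (C.g_eq_some hg).2⟩ ha'
    | succ m =>
      obtain ⟨w, hw, hg⟩ := C.o_succ_some.1 h
      obtain ⟨w', hw', hg'⟩ := C.o_succ_some.1 h'
      obtain rfl : w = w' := C.arc_inj (C.g_eq_some hg).2 (C.g_eq_some hg').2
      obtain ⟨rfl, rfl⟩ := ih m w hw hw'
      exact ⟨rfl, rfl⟩

lemma o_none_succ {a : V} {n : ℕ} (h : C.o a n = none) : C.o a (n+1) = none := by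
  show (C.o a n).bind C.g = none
  rw [h]; rfl

lemma o_none_mono {a : V} {n m : ℕ} (h : C.o a n = none) (hnm : n ≤ m) :
    C.o a m = none := by
  induction m with
  | zero => exact Nat.le_zero.1 hnm ▸ h
  | succ k ih =>
    rcases Nat.lt_or_ge n (k+1) with hlt | hge
    · exact C.o_none_succ (ih (by omega))
    · obtain rfl : n = k + 1 := by omega
      exact h

variable {C}

section Walk

variable {a : V} (hfin : ∃ n, C.o a n = none)

open Classical in
/-- The length of a finite trajectory. -/
noncomputable def tlen (hfin : ∃ n, C.o a n = none) : ℕ := Nat.find hfin - 1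

open Classical in
lemma tlen_spec : C.o a (tlen hfin + 1) = none ∧ ∀ j ≤ tlen hfin, C.o a j ≠ none := by
  have h0 : C.o a 0 ≠ none := by simp [o]
  have hpos : 1 ≤ Nat.find hfin := by
    rcases Nat.eq_zero_or_pos (Nat.find hfin) with h | h
    · exact absurd (h ▸ Nat.find_spec hfin) h0
    · exact h
  constructor
  · have : tlen hfin + 1 = Nat.find hfin := by unfold tlen; omega
    exact this ▸ Nat.find_spec hfin
  · intro j hj
    exact Nat.find_min hfin (by unfold tlen at hj; omega)

lemma o_isSome_of_le {j : ℕ} (hj : j ≤ tlen hfin) : ∃ v, C.o a j = some v := by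
  rcases h : C.o a j with _ | v
  · exact absurd h ((tlen_spec hfin).2 j hj)
  · exact ⟨v, rfl⟩

/-- The walk corresponding to a finite trajectory. -/
noncomputable def trajW : DiWalk V :=
  ⟨fun j => (C.o a (min j (tlen hfin))).getD a, (tlen hfin : ℕ∞)⟩

lemma trajW_len : (trajW hfin).len = (tlen hfin : ℕ∞) := rfl

lemma trajW_notRay : ¬ (trajW hfin).IsRay := by
  show ¬ _ = ⊤
  rw [trajW_len]
  exact (Ne.symm (by simp) : (( tlen hfin : ℕ∞)) ≠ ⊤)

lemma trajW_o {j : ℕ} (hj : j ≤ tlen hfin) : C.o a j = some ((trajW hfin).vtx j) := by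
  obtain ⟨v, hv⟩ := o_isSome_of_le hfin hj
  have : (trajW hfin).vtx j = v := by
    show (C.o a (min j (tlen hfin))).getD a = v
    rw [min_eq_left hj, hv]; rfl
  rw [this, hv]

lemma trajW_Ini : (trajW hfin).Ini = a := by
  have := trajW_o hfin (Nat.zero_le _)
  simp only [o] at this
  exact (Option.some_inj.1 this).symm

lemma trajW_Ter_o : C.o a (tlen hfin) = some ((trajW hfin).Ter) := by
  have hTer : (trajW hfin).Ter = (trajW hfin).vtx (tlen hfin) := by
    show (trajW hfin).vtx ((trajW hfin).len.toNat) = _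
    rw [trajW_len]
    simp
  rw [hTer]
  exact trajW_o hfin le_rfl

lemma trajW_Ter_g : C.g ((trajW hfin).Ter) = none := by
  have h1 := trajW_Ter_o hfin
  have h2 := (tlen_spec hfin).1
  rcases hg : C.g ((trajW hfin).Ter) with _ | u
  · rfl
  · exfalso
    have h3 : C.o a (tlen hfin + 1) = some u := C.o_succ_some.2 ⟨_, h1, hg⟩
    rw [h2] at h3
    exact absurd h3 (by simp)

lemma trajW_path (ha : C.NoIn a) : (trajW hfin).IsPathIn C.D := by
  constructor
  · intro i hi
    rw [trajW_len] at hi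
    have hi' : i + 1 ≤ tlen hfin := by exact_mod_cast hi
    have h1 := trajW_o hfin (by omega : i ≤ tlen hfin)
    have h2 := trajW_o hfin hi'
    obtain ⟨w, hw, hg⟩ := C.o_succ_some.1 h2
    obtain rfl : w = (trajW hfin).vtx i := by rw [h1] at hw; exact Option.some_inj.1 hw.symm
    exact C.arc_D (C.g_eq_some hg).2
  · intro i j hi hj he
    rw [trajW_len] at hi hj
    have hi' : i ≤ tlen hfin := by exact_mod_cast hi
    have hj' : j ≤ tlen hfin := by exact_mod_cast hj
    have h1 := trajW_o hfin hi'
    have h2 := trajW_o hfin hj'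
    rw [he] at h1
    exact (C.o_inj ha ha i j _ h1 h2).2

lemma trajW_support {v : V} :
    v ∈ (trajW hfin).support ↔ ∃ j ≤ tlen hfin, C.o a j = some v := by
  constructor
  · rintro ⟨i, hi, rfl⟩
    rw [trajW_len] at hi
    have hi' : i ≤ tlen hfin := by exact_mod_cast hi
    exact ⟨i, hi', trajW_o hfin hi'⟩
  · rintro ⟨j, hj, hv⟩
    refine ⟨j, ?_, ?_⟩
    · rw [trajW_len]; exact_mod_cast hj
    · have := trajW_o hfin hj
      rw [hv] at this
      exact (Option.some_inj.1 this).symm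

end Walk

end Comp

end Shift
namespace Shift

namespace Comp

variable {V : Type*} (C : Comp V)

lemma not_B0_of_arc {x u : V} (h : C.Arc x u) : x ∉ C.B0 :=
  fun hb => C.hDim x hb u (C.arc_D h)

/-- A vertex where the composed system stops although its interior is available is a
terminal vertex of `Q`. -/
lemma stop_internal {t : V} (hInt : C.Internal t) (hno : ¬ ∃ u, C.Arc t u) :
    t ∈ TerSet C.Q := by
  rcases hInt with ⟨hVQ, hnoI⟩ | ⟨hnVQ, c, hc⟩
  · by_contra hnt
    obtain ⟨b, hb⟩ := exists_succ C.hQ hVQ hnt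
    have houtb : C.OutP b := by
      by_contra hno2
      exact hno ⟨b, Or.inl ⟨hb, hno2⟩⟩
    obtain ⟨c, hc⟩ := houtb
    by_cases hcb : (c, b) ∈ ESet C.Q
    · obtain rfl := EQ_funHead C.hQ hcb hb
      exact hnoI ⟨b, hc, hb⟩
    · refine hno ⟨c, Or.inr ?_⟩
      rcases hc.D1 with h | ⟨v, hvD, hvcn, hv⟩
      · exact absurd h hcb
      · rcases hv with ⟨hvn, rfl⟩ | hvb
        · exact absurd (EQ_head_VQ hb) hvn
        · obtain rfl := EQ_funHead C.hQ hvb hb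
          refine ⟨hvD, ?_, b, ⟨hc, hcb⟩, Or.inr hb⟩
          intro htc
          obtain rfl := EQ_funTail C.hQ htc hb
          exact C.Pstep_irrefl hc
  · exfalso
    by_cases hct : (c, t) ∈ ESet C.Q
    · exact absurd (EQ_head_VQ hct) hnVQ
    · refine hno ⟨c, Or.inr ?_⟩
      rcases hc.D1 with h | ⟨v, hvD, hvcn, hv⟩
      · exact absurd h hct
      · rcases hv with ⟨hvn, heq⟩ | hvt
        · subst heq
          refine ⟨hvD, ?_, t, ⟨hc, hct⟩, Or.inl ⟨hnVQ, rfl⟩⟩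
          intro htc
          exact hnVQ (EQ_tail_VQ htc)
        · exact absurd (EQ_head_VQ hvt) hnVQ

/-- A vertex reached by the composed system whose interior is unavailable is an end of a
finite member of `P1` lying in `B0 \ T`. -/
lemma stop_noInternal {t : V} (hr : ∃ x, C.Arc x t) (hnInt : ¬ C.Internal t) :
    t ∈ C.B0 \ TerSet C.Q ∧ ∃ π ∈ C.P1, ¬ π.IsRay ∧ π.Ter = t := by
  obtain ⟨x, harc⟩ := hr
  rcases harc with ⟨hEQ, hnoOut⟩ | ⟨hD, hne, a, hst, hc⟩
  · have hVQ := EQ_head_VQ hEQ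
    have hex : ∃ b, C.PstepI b t := by
      by_contra hnoI
      exact hnInt (Or.inl ⟨hVQ, hnoI⟩)
    obtain ⟨b, hb⟩ := hex
    exact absurd (C.no_pstep_into_head hEQ hnoOut hb.1) not_false
  · by_cases hVQ : t ∈ VSet C.Q
    · have hex : ∃ b, C.PstepI b t := by
        by_contra hnoI
        exact hnInt (Or.inl ⟨hVQ, hnoI⟩)
      obtain ⟨b, hb⟩ := hex
      obtain rfl := C.Pstep_inj hst.1 hb.1
      exact absurd hb.2 hst.2
    · have hnoOut : ¬ C.OutP t := by
        intro hout
        exact hnInt (Or.inr ⟨hVQ, hout⟩)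
      obtain ⟨π, hπ, hrr, hter⟩ := C.pstep_end hst.1 hnoOut
      rcases C.hP1f π hπ hrr with hbb | hss
      · exact ⟨hter ▸ hbb, π, hπ, hrr, hter⟩
      · exact absurd (Ini_sub_VQ (hter ▸ hss)) hVQ

variable {C}

/-- Trajectories from distinct sources are disjoint. -/
lemma trajW_disjoint {a a' : V} (ha : C.NoIn a) (ha' : C.NoIn a') (hne : a ≠ a')
    (hfin : ∃ n, C.o a n = none) (hfin' : ∃ n, C.o a' n = none) :
    Disjoint (trajW hfin).support (trajW hfin').support := by
  rw [Set.disjoint_left]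
  rintro v hv hv'
  obtain ⟨i, hi, h1⟩ := (trajW_support hfin).1 hv
  obtain ⟨j, hj, h2⟩ := (trajW_support hfin').1 hv'
  exact hne (C.o_inj ha ha' i j v h1 h2).1

/-- The two possible states at the end of a finite trajectory. -/
lemma trajW_Ter_stop {a : V} (hfin : ∃ n, C.o a n = none) :
    (C.Internal (trajW hfin).Ter ∧ ¬ ∃ u, C.Arc (trajW hfin).Ter u) ∨
      ¬ C.Internal (trajW hfin).Ter := by
  have hg := trajW_Ter_g hfin
  by_cases hInt : C.Internal (trajW hfin).Ter
  · refine Or.inl ⟨hInt, ?_⟩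
    rintro ⟨u, hu⟩
    exact g_ne_none C hInt hu hg
  · exact Or.inr hInt

/-- If the trajectory has positive length, its last vertex is reached by an `Arc`. -/
lemma trajW_Ter_reached {a : V} (hfin : ∃ n, C.o a n = none) (hlen : tlen hfin ≠ 0) :
    ∃ x, C.Arc x ((trajW hfin).Ter) := by
  obtain ⟨m, hm⟩ : ∃ m, tlen hfin = m + 1 := ⟨tlen hfin - 1, by omega⟩
  have h1 := trajW_Ter_o hfin
  rw [hm] at h1
  obtain ⟨w, hw, hg⟩ := C.o_succ_some.1 h1
  exact ⟨w, (C.g_eq_some hg).2⟩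

end Comp

end Shift
namespace Shift

namespace Comp

variable {V : Type*}

section Ray

variable (C : Comp V) (a : V)

/-- The ray corresponding to an infinite trajectory. -/
noncomputable def rayW : DiWalk V := ⟨fun n => (C.o a n).getD a, ⊤⟩

variable {C a}

lemma rayW_ray : (rayW C a).IsRay := rfl

lemma rayW_o (hinf : ∀ n, C.o a n ≠ none) (n : ℕ) : C.o a n = some ((rayW C a).vtx n) := by
  rcases h : C.o a n with _ | v
  · exact absurd h (hinf n)
  · show _ = some ((C.o a n).getD a)
    rw [h]; rfl

lemma rayW_arc (hinf : ∀ n, C.o a n ≠ none) (n : ℕ) : C.Arc ((rayW C a).vtx n) ((rayW C a).vtx (n+1)) := by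
  have h1 := rayW_o hinf n
  have h2 := rayW_o hinf (n+1)
  obtain ⟨w, hw, hg⟩ := C.o_succ_some.1 h2
  obtain rfl : w = (rayW C a).vtx n := by rw [h1] at hw; exact (Option.some_inj.1 hw).symm
  exact (C.g_eq_some hg).2

lemma rayW_path (hinf : ∀ n, C.o a n ≠ none) (ha : C.NoIn a) : (rayW C a).IsPathIn C.D := by
  constructor
  · intro i _
    exact C.arc_D (rayW_arc hinf i)
  · intro i j _ _ he
    have h1 := rayW_o hinf i
    have h2 := rayW_o hinf j
    rw [he] at h1
    exact (C.o_inj ha ha i j _ h1 h2).2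

lemma rayW_not_B0 (hinf : ∀ n, C.o a n ≠ none) (n : ℕ) : (rayW C a).vtx n ∉ C.B0 :=
  C.not_B0_of_arc (rayW_arc hinf n)

/-- The escape lemma: an infinite trajectory in the composed system either yields an
outgoing comb in `(D, B0)` (impossible), or eventually follows a ray of `P1` outside
of `V(Q)`. -/
lemma escape (hinf : ∀ n, C.o a n ≠ none) (ha : C.NoIn a) :
    ∃ π ∈ C.P1, π.IsRay ∧ ∃ j0 : ℕ, ∀ k : ℕ, π.vtx (j0 + k) ∉ VSet C.Q := by
  classical
  set W := rayW C a with hW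
  have hWpath := rayW_path hinf ha
  set touched := {q ∈ C.Q | ∃ i n : ℕ, (i : ℕ∞) ≤ q.len ∧ q.vtx i = W.vtx n} with htou
  by_cases hfin : touched.Infinite
  · -- build an outgoing comb, contradicting hCO
    exfalso
    apply C.hCO
    refine ⟨W, hWpath, rayW_ray, ?_⟩
    -- teeth
    have hvisited : ∀ q ∈ touched,
        {i : ℕ | (i : ℕ∞) ≤ q.len ∧ ∃ n, q.vtx i = W.vtx n}.Nonempty ∧
        BddAbove {i : ℕ | (i : ℕ∞) ≤ q.len ∧ ∃ n, q.vtx i = W.vtx n} := by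
      rintro q ⟨hq, i, n, hi, he⟩
      refine ⟨⟨i, hi, n, he⟩, ⟨q.len.toNat, ?_⟩⟩
      rintro j ⟨hj, -⟩
      rw [q_len C.hQ hq, Nat.cast_le] at hj
      exact hj
    let m : DiWalk V → ℕ := fun q => sSup {i : ℕ | (i : ℕ∞) ≤ q.len ∧ ∃ n, q.vtx i = W.vtx n}
    have hm : ∀ q ∈ touched, ((m q : ℕ∞) ≤ q.len ∧ ∃ n, q.vtx (m q) = W.vtx n) := by
      intro q hq
      exact Nat.sSup_mem (hvisited q hq).1 (hvisited q hq).2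
    have hmmax : ∀ q ∈ touched, ∀ j : ℕ, ((j : ℕ∞) ≤ q.len) → (∃ n, q.vtx j = W.vtx n) →
        j ≤ m q := by
      intro q hq j hj hn
      exact le_csSup (hvisited q hq).2 ⟨hj, hn⟩
    have hmlt : ∀ q ∈ touched, m q < q.len.toNat := by
      intro q hq
      have h1 := (hm q hq).1
      rw [q_len C.hQ hq.1, Nat.cast_le] at h1
      rcases lt_or_eq_of_le h1 with h | h
      · exact h
      · exfalso
        obtain ⟨n, hn⟩ := (hm q hq).2
        refine rayW_not_B0 hinf n ?_
        rw [hW] at hn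
        rw [← hn, h]
        exact q_Ter_mem_B0 C.hQ hq.1
    let tooth : DiWalk V → DiWalk V :=
      fun q => ⟨fun j => q.vtx (m q + j), ((q.len.toNat - m q : ℕ) : ℕ∞)⟩
    have htooth_sub : ∀ q ∈ touched, (tooth q).support ⊆ q.support := by
      rintro q hq v ⟨j, hj, rfl⟩
      refine ⟨m q + j, ?_, rfl⟩
      rw [q_len C.hQ hq.1, Nat.cast_le]
      have hj2 : ((j:ℕ∞)) ≤ ((q.len.toNat - m q : ℕ) : ℕ∞) := hj
      have : j ≤ q.len.toNat - m q := by exact_mod_cast hj2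
      have := hmlt q hq
      omega
    refine ⟨tooth '' touched, Set.Infinite.image ?_ hfin, ?_, ?_⟩
    · -- InjOn
      intro q hq q' hq' he
      have h1 : (tooth q).Ini ∈ q.support := htooth_sub q hq (Ini_mem_support _)
      have h2 : (tooth q').Ini ∈ q'.support := htooth_sub q' hq' (Ini_mem_support _)
      rw [← he] at h2
      exact eq_of_mem_support C.hQ.1.2 hq.1 hq'.1 h1 h2
    · -- each tooth is good
      rintro p ⟨q, hq, rfl⟩
      have hlt := hmlt q hq
      have hlen : (tooth q).len = ((q.len.toNat - m q : ℕ) : ℕ∞) := rfl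
      have hray : ¬ (tooth q).IsRay := by
        rw [DiWalk.IsRay, hlen]
        simp
      refine ⟨⟨?_, ?_⟩, hray, ?_, ?_, ?_, ?_⟩
      · -- edges
        intro i hi
        rw [hlen] at hi
        have hi' : i + 1 ≤ q.len.toNat - m q := by exact_mod_cast hi
        show C.D (q.vtx (m q + i)) (q.vtx (m q + (i + 1)))
        rw [show m q + (i + 1) = (m q + i) + 1 by omega]
        refine (C.hQ.1.1 q hq.1).1 (m q + i) ?_
        rw [q_len C.hQ hq.1]
        have : (m q + i) + 1 ≤ q.len.toNat := by omega
        exact_mod_cast this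
      · -- inj
        intro i j hi hj he
        rw [hlen] at hi hj
        have hi' : i ≤ q.len.toNat - m q := by exact_mod_cast hi
        have hj' : j ≤ q.len.toNat - m q := by exact_mod_cast hj
        have := (C.hQ.1.1 q hq.1).2 (m q + i) (m q + j) ?_ ?_ he
        · omega
        · rw [q_len C.hQ hq.1]; exact_mod_cast by omega
        · rw [q_len C.hQ hq.1]; exact_mod_cast by omega
      · -- 1 ≤ len
        rw [hlen]
        exact_mod_cast Nat.one_le_iff_ne_zero.2 (by omega)
      · -- Ini ∈ W.support
        obtain ⟨n, hn⟩ := (hm q hq).2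
        exact ⟨n, le_top, hn.symm⟩
      · -- Ter ∈ B0
        have hTer : (tooth q).Ter = q.vtx (m q + (q.len.toNat - m q)) := by
          show q.vtx (m q + ((q.len.toNat - m q : ℕ) : ℕ∞).toNat) = _
          rw [ENat.toNat_coe]
        rw [hTer, show m q + (q.len.toNat - m q) = q.len.toNat by omega]
        exact q_Ter_mem_B0 C.hQ hq.1
      · -- support ∩ W.support = {Ini}
        apply Set.eq_singleton_iff_unique_mem.2
        constructor
        · exact ⟨Ini_mem_support _, by obtain ⟨n, hn⟩ := (hm q hq).2; exact ⟨n, le_top, hn.symm⟩⟩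
        · rintro v ⟨⟨j, hj, rfl⟩, hvW⟩
          rw [hlen] at hj
          have hj' : j ≤ q.len.toNat - m q := by exact_mod_cast hj
          obtain ⟨n, _, hn⟩ := hvW
          have hle : m q + j ≤ m q := by
            refine hmmax q hq _ ?_ ⟨n, hn.symm⟩
            rw [q_len C.hQ hq.1]
            exact_mod_cast by omega
          have : j = 0 := by omega
          subst this
          rfl
    · -- pairwise disjoint teeth
      rintro p ⟨q, hq, rfl⟩ p' ⟨q', hq', rfl⟩ hne
      have hqq : q ≠ q' := by rintro rfl; exact hne rfl
      exact Set.disjoint_of_subset (htooth_sub q hq) (htooth_sub q' hq')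
        (C.hQ.1.2 q hq.1 q' hq'.1 hqq)
  · -- touched finite: W eventually follows a unique ray of P1 outside VQ
    rw [Set.not_infinite] at hfin
    have hVI : {n : ℕ | W.vtx n ∈ VSet C.Q}.Finite := by
      have hfins : ∀ q ∈ touched, {n : ℕ | W.vtx n ∈ q.support}.Finite := by
        intro q hq
        refine Set.Finite.preimage ?_ (support_finite (q_notRay C.hQ hq.1))
        intro x _ y _ he
        have h1 := rayW_o hinf x
        have h2 := rayW_o hinf y
        rw [he] at h1
        exact (C.o_inj ha ha x y _ h1 h2).2
      refine Set.Finite.subset (Set.Finite.biUnion hfin hfins) ?_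
      rintro n hn
      obtain ⟨q, hq, i, hi, hv⟩ := mem_VSet_iff.1 hn
      have hqt : q ∈ touched := ⟨hq, i, n, hi, hv⟩
      exact Set.mem_biUnion hqt (by exact ⟨i, hi, hv⟩)
    obtain ⟨N0, hN0⟩ := hVI.bddAbove
    have hNout : ∀ k : ℕ, W.vtx (N0 + 1 + k) ∉ VSet C.Q := by
      intro k hk
      have := hN0 hk
      omega
    have hsteps : ∀ k : ℕ, C.Pstep (W.vtx (N0 + 1 + k)) (W.vtx (N0 + 1 + k + 1)) := by
      intro k
      rcases rayW_arc hinf (N0 + 1 + k) with ⟨hEQ, -⟩ | ⟨-, -, b, hst, hc⟩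
      · exact absurd (EQ_tail_VQ hEQ) (hNout k)
      · rcases hc with ⟨-, rfl⟩ | hxb
        · exact hst.1
        · exact absurd (EQ_tail_VQ hxb) (hNout k)
    obtain ⟨π, hπ, j0, hj0, hv0, hv1⟩ := hsteps 0
    have hchain : ∀ k : ℕ, π.vtx (j0 + k) = W.vtx (N0 + 1 + k) ∧
        ((j0 + k : ℕ) : ℕ∞) + 1 ≤ π.len := by
      intro k
      induction k with
      | zero => exact ⟨by simpa using hv0, by simpa using hj0⟩
      | succ n ihn =>
        obtain ⟨heq, hb⟩ := ihn
        obtain ⟨π', hπ', j', hj', hv0', hv1'⟩ := hsteps n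
        rw [← heq] at hv0'
        obtain ⟨he1, he2⟩ := posUnique C.hP1 C.hP1d hπ' hπ (cast_le_of_succ hj')
          (cast_le_of_succ hb) hv0'
        rw [he1, he2] at hv1'
        have heq1 : π.vtx (j0 + (n+1)) = W.vtx (N0 + 1 + (n+1)) := by
          rw [show j0 + (n+1) = (j0 + n) + 1 by omega, hv1']
          rfl
        refine ⟨heq1, ?_⟩
        obtain ⟨π'', hπ'', j'', hj'', hv0'', hv1''⟩ := hsteps (n+1)
        rw [← heq1] at hv0''
        obtain ⟨he1'', he2''⟩ := posUnique C.hP1 C.hP1d hπ'' hπ (cast_le_of_succ hj'')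
          (cast_succ_le hb) hv0''
        rw [he1'', he2''] at hj''
        exact_mod_cast hj''
    refine ⟨π, hπ, ?_, j0, fun k => (hchain k).1 ▸ hNout k⟩
    by_contra hray
    have hb := (hchain (π.len.toNat + 1)).2
    rw [← len_coe hray] at hb
    have : j0 + (π.len.toNat + 1) + 1 ≤ π.len.toNat := by exact_mod_cast hb
    omega

end Ray

end Comp

end Shift
namespace Shift

namespace Comp

variable {V : Type*} (C : Comp V)

lemma trivial_end {π : DiWalk V} (h1 : ¬ ((0:ℕ∞) + 1 ≤ π.len)) :
    ¬ π.IsRay ∧ π.Ter = π.Ini := by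
  have hlt : π.len < 1 := by simpa using not_le.1 h1
  have hlen0 : π.len = 0 := ENat.lt_one_iff_eq_zero.1 hlt
  constructor
  · rw [notRay_iff, hlen0]; simp
  · show π.vtx _ = π.vtx 0
    rw [hlen0]; rfl

/-- No arc of the composed system enters an initial vertex of `P1`. -/
lemma noIn_ini {π : DiWalk V} (hπ : π ∈ C.P1) : C.NoIn π.Ini := by
  rintro ⟨x, harc⟩
  rcases harc with ⟨hEQ, hnoOut⟩ | ⟨-, -, b, hst, -⟩
  · by_cases h1 : (0:ℕ∞) + 1 ≤ π.len
    · exact hnoOut ⟨π.vtx 1, π, hπ, 0, h1, rfl, rfl⟩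
    · obtain ⟨hray, hTer⟩ := trivial_end h1
      rcases C.hP1f π hπ hray with hb | hs
      · rw [hTer] at hb
        exact hb.2 (VQ_B0_sub_T C.hDim C.hQ (EQ_head_VQ hEQ) hb.1)
      · exact EQ_head_ne_ini C.hQ hEQ (hTer ▸ hs)
  · obtain ⟨π', hπ', j, hj, -, hv⟩ := hst.1
    have hv' : π'.vtx (j+1) = π.vtx 0 := hv
    obtain ⟨-, hj0⟩ := posUnique C.hP1 C.hP1d hπ' hπ (cast_succ_le hj)
      (by simp : ((0:ℕ):ℕ∞) ≤ π.len) hv'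
    omega

/-- If the interior of an initial vertex of `P1` is unavailable, it lies in `B0`. -/
lemma start_B0 {π : DiWalk V} (hπ : π ∈ C.P1) (hnInt : ¬ C.Internal π.Ini) :
    π.Ini ∈ C.B0 := by
  by_cases hVQ : π.Ini ∈ VSet C.Q
  · exfalso
    have hex : ∃ b, C.PstepI b π.Ini := by
      by_contra h
      exact hnInt (Or.inl ⟨hVQ, h⟩)
    obtain ⟨b, hb⟩ := hex
    obtain ⟨π', hπ', j, hj, -, hv⟩ := hb.1
    have hv' : π'.vtx (j+1) = π.vtx 0 := hv
    obtain ⟨-, hj0⟩ := posUnique C.hP1 C.hP1d hπ' hπ (cast_succ_le hj)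
      (by simp : ((0:ℕ):ℕ∞) ≤ π.len) hv'
    omega
  · have hnout : ¬ C.OutP π.Ini := fun h => hnInt (Or.inr ⟨hVQ, h⟩)
    by_cases h1 : (0:ℕ∞) + 1 ≤ π.len
    · exact absurd ⟨π.vtx 1, π, hπ, 0, h1, rfl, rfl⟩ hnout
    · obtain ⟨hray, hTer⟩ := trivial_end h1
      rcases C.hP1f π hπ hray with hb | hs
      · exact (hTer ▸ hb).1
      · exact absurd (Ini_sub_VQ (hTer ▸ hs)) hVQ

lemma tlen0_Ter {a : V} (hfin : ∃ n, C.o a n = none) (h0 : tlen hfin = 0) :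
    (trajW hfin).Ter = a := by
  have h1 := trajW_Ter_o hfin
  rw [h0] at h1
  simp only [o] at h1
  exact (Option.some_inj.1 h1).symm

/-- The Ter of every finite trajectory from an initial vertex of `P1` lies in `B0`. -/
lemma traj_Ter_B0 {π : DiWalk V} (hπ : π ∈ C.P1)
    (hfin : ∃ n, C.o π.Ini n = none) : (trajW hfin).Ter ∈ C.B0 := by
  rcases trajW_Ter_stop hfin with ⟨hInt, hno⟩ | hnInt
  · exact TerSet_sub_B0 C.hQ (C.stop_internal hInt hno)
  · by_cases h0 : tlen hfin = 0
    · rw [tlen0_Ter C hfin h0]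
      exact C.start_B0 hπ (by rwa [tlen0_Ter C hfin h0] at hnInt)
    · exact (C.stop_noInternal (trajW_Ter_reached hfin h0) hnInt).1.1

/-- Composition theorem ("Lemma B"): if all members of `P1` are finite (a linkage in the
shifted dimaze), then the initial vertices of `P1` are linkable in `(D, B0)`. -/
theorem linkable_of_noRay (hnoray : ∀ π ∈ C.P1, ¬ π.IsRay) :
    Linkable C.D C.B0 (IniSet C.P1) := by
  classical
  have hfin : ∀ π ∈ C.P1, ∃ n, C.o π.Ini n = none := by
    intro π hπ
    by_contra h
    push_neg at h
    obtain ⟨π', hπ', hray, -⟩ := escape h (C.noIn_ini hπ)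
    exact hnoray π' hπ' hray
  refine ⟨{w | ∃ π : DiWalk V, ∃ hπ : π ∈ C.P1, w = trajW (hfin π hπ)}, ⟨⟨?_, ?_⟩, ?_⟩, ?_⟩
  · rintro w ⟨π, hπ, rfl⟩
    exact trajW_path _ (C.noIn_ini hπ)
  · rintro w ⟨π, hπ, rfl⟩ w' ⟨π', hπ', rfl⟩ hne
    by_cases hI : π.Ini = π'.Ini
    · exfalso
      apply hne
      congr 1
    · exact trajW_disjoint (C.noIn_ini hπ) (C.noIn_ini hπ') hI _ _
  · rintro w ⟨π, hπ, rfl⟩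
    exact ⟨trajW_notRay _, C.traj_Ter_B0 hπ _⟩
  · apply Set.eq_of_subset_of_subset
    · rintro v ⟨w, ⟨π, hπ, rfl⟩, rfl⟩
      exact ⟨π, hπ, (trajW_Ini _).symm⟩
    · rintro v ⟨π, hπ, rfl⟩
      exact ⟨trajW (hfin π hπ), ⟨π, hπ, rfl⟩, trajW_Ini _⟩

end Comp

end Shift
namespace Shift

variable {V : Type*} {D : V → V → Prop} {B0 : Set V} {Q : Set (DiWalk V)}

/-- A shifted edge leaving a vertex outside `V(Q)` is a `D`-edge. -/
lemma D1_step_out (h : shiftedDigraph D (ESet Q) (VSet Q) a u) (ha : a ∉ VSet Q) :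
    D a u := by
  rcases h with h | ⟨v, hvD, -, hv⟩
  · exact absurd (EQ_head_VQ h) ha
  · rcases hv with ⟨-, rfl⟩ | hva
    · exact hvD
    · exact absurd (EQ_head_VQ hva) ha

/-- From a spine of the shifted dimaze whose ray eventually avoids `V(Q)`, build a spine
of `(D, B0)`. -/
lemma tail_spine (hDim : IsDimaze D B0) (hQ : IsLinkage D B0 Q) {R : DiWalk V}
    (hsp : IsSpine (shiftedDigraph D (ESet Q) (VSet Q)) ((B0 \ TerSet Q) ∪ IniSet Q) R)
    {j0 : ℕ} (htail : ∀ k, R.vtx (j0 + k) ∉ VSet Q) : ∃ W, IsSpine D B0 W := by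
  classical
  obtain ⟨hRpath, hRray, P, hPinf, hPgood, hPdisj⟩ := hsp
  set Rt : DiWalk V := ⟨fun k => R.vtx (j0 + k), ⊤⟩ with hRt
  have hRtray : Rt.IsRay := rfl
  have hRtpath : Rt.IsPathIn D := by
    constructor
    · intro i _
      have hD1 : shiftedDigraph D (ESet Q) (VSet Q) (R.vtx (j0 + i)) (R.vtx ((j0 + i) + 1)) :=
        hRpath.1 (j0 + i) (by rw [hRray]; exact le_top)
      show D (R.vtx (j0 + i)) (R.vtx (j0 + (i+1)))
      rw [show j0 + (i+1) = (j0 + i) + 1 by omega]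
      exact D1_step_out hD1 (htail i)
    · intro i j _ _ he
      have := hRpath.2 (j0 + i) (j0 + j) (by rw [hRray]; exact le_top)
        (by rw [hRray]; exact le_top) he
      omega
  have hRt_sub : Rt.support ⊆ R.support := by
    rintro v ⟨k, -, rfl⟩
    exact ⟨j0 + k, by rw [hRray]; exact le_top, rfl⟩
  have hRt_VQ : ∀ v ∈ Rt.support, v ∉ VSet Q := by
    rintro v ⟨k, -, rfl⟩
    exact htail k
  -- index of each tooth's initial vertex on R
  have hidx : ∀ p ∈ P, ∃ i : ℕ, R.vtx i = p.Ini := by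
    intro p hp
    obtain ⟨i, -, hi⟩ := (hPgood p hp).2.2.2.1
    exact ⟨i, hi⟩
  choose! idx hidxs using hidx
  have hidx_inj : ∀ p ∈ P, ∀ p' ∈ P, idx p = idx p' → p = p' := by
    intro p hp p' hp' he
    have h1 : p.Ini ∈ p.support := Ini_mem_support p
    have h2 : p.Ini ∈ p'.support := by
      rw [← hidxs p hp, he, hidxs p' hp']
      exact Ini_mem_support p'
    exact eq_of_mem_support hPdisj hp hp' h1 h2
  -- teeth starting on the tail
  set P' : Set (DiWalk V) := {p ∈ P | j0 ≤ idx p} with hP'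
  have hP'inf : P'.Infinite := by
    have hbad : {p ∈ P | idx p < j0}.Finite := by
      refine Set.Finite.of_finite_image (f := idx) ((Set.finite_Iio j0).subset ?_) ?_
      · rintro i ⟨p, ⟨-, hlt⟩, rfl⟩
        exact hlt
      · intro p hp p' hp' he
        exact hidx_inj p hp.1 p' hp'.1 he
    refine Set.Infinite.mono ?_ (hPinf.diff hbad)
    rintro p ⟨hp, hnbad⟩
    refine ⟨hp, ?_⟩
    by_contra h
    exact hnbad ⟨hp, by omega⟩
  have hP'Ini : ∀ p ∈ P', p.Ini ∈ Rt.support := by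
    rintro p ⟨hp, hj⟩
    refine ⟨idx p - j0, le_top, ?_⟩
    show R.vtx (j0 + (idx p - j0)) = p.Ini
    rw [show j0 + (idx p - j0) = idx p by omega]
    exact hidxs p hp
  have hP'IniVQ : ∀ p ∈ P', p.Ini ∉ VSet Q := fun p hp => hRt_VQ _ (hP'Ini p hp)
  -- split according to whether the tooth meets V(Q)
  set hits : DiWalk V → Set ℕ := fun p => {i : ℕ | (i : ℕ∞) ≤ p.len ∧ p.vtx i ∈ VSet Q}
    with hhits
  have hsplit : {p ∈ P' | hits p = ∅}.Infinite ∨ {p ∈ P' | (hits p).Nonempty}.Infinite := by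
    by_contra h
    push_neg at h
    refine hP'inf (Set.Finite.subset (h.1.union h.2) ?_)
    intro p hp
    rcases Set.eq_empty_or_nonempty (hits p) with he | hne
    · exact Or.inl ⟨hp, he⟩
    · exact Or.inr ⟨hp, hne⟩
  -- common facts about teeth
  have hmeet : ∀ p ∈ P, p.support ∩ Rt.support ⊆ {p.Ini} := by
    intro p hp
    have h1 := (hPgood p hp).2.2.2.2.2
    refine subset_trans ?_ h1.subset
    exact Set.inter_subset_inter_right _ hRt_sub
  rcases hsplit with hinf | hinf
  · -- pure teeth: they avoid V(Q) entirely and are already D-paths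
    refine ⟨Rt, hRtpath, hRtray, {p ∈ P' | hits p = ∅}, hinf, ?_, ?_⟩
    · rintro p ⟨hp', hpure⟩
      obtain ⟨hp, hj⟩ := hp'
      have hp' : p ∈ P' := ⟨hp, hj⟩
      obtain ⟨ppath, pray, plen, -, pTer, -⟩ := hPgood p hp
      have havoid : ∀ i : ℕ, (i : ℕ∞) ≤ p.len → p.vtx i ∉ VSet Q := by
        intro i hi hv
        have hmem : i ∈ hits p := ⟨hi, hv⟩
        rw [hpure] at hmem
        exact hmem
      refine ⟨⟨?_, ppath.2⟩, pray, plen, hP'Ini p hp', ?_, ?_⟩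
      · intro i hi
        exact D1_step_out (ppath.1 i hi) (havoid i (cast_le_of_succ hi))
      · rcases pTer with hb | hs
        · exact hb.1
        · exact absurd (Ini_sub_VQ hs)
            (havoid p.len.toNat (le_of_eq (len_coe pray)))
      · refine Set.eq_singleton_iff_unique_mem.2 ⟨⟨Ini_mem_support p, hP'Ini p hp'⟩, ?_⟩
        intro v hv
        exact hmeet p hp hv
    · rintro p ⟨⟨hp, -⟩, -⟩ p' ⟨⟨hp', -⟩, -⟩ hne
      exact hPdisj p hp p' hp' hne
  · -- impure teeth: cut at the first vertex in V(Q) and continue along its Q-path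
    set Pim := {p ∈ P' | (hits p).Nonempty} with hPim
    have hPimP : ∀ p ∈ Pim, p ∈ P := fun p hp => hp.1.1
    -- the cut data
    have hcut : ∀ p ∈ Pim, ∃ q ∈ Q, ∃ r : ℕ, (r : ℕ∞) ≤ q.len ∧
        q.vtx r = p.vtx (sInf (hits p)) := by
      rintro p ⟨hp', hne⟩
      have hmem := Nat.sInf_mem hne
      obtain ⟨q, hq, r, hr, hv⟩ := mem_VSet_iff.1 hmem.2
      exact ⟨q, hq, r, hr, hv⟩
    choose! qp hqp rp hrp1 hrp2 using hcut
    -- properties of the cut index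
    have hm_mem : ∀ p ∈ Pim, (((sInf (hits p) : ℕ) : ℕ∞) ≤ p.len ∧
        p.vtx (sInf (hits p)) ∈ VSet Q) := by
      rintro p ⟨hp', hne⟩
      exact Nat.sInf_mem hne
    have hm_pos : ∀ p ∈ Pim, 1 ≤ sInf (hits p) := by
      intro p hp
      rcases Nat.eq_zero_or_pos (sInf (hits p)) with h0 | h
      · exfalso
        have := (hm_mem p hp).2
        rw [h0] at this
        exact hP'IniVQ p hp.1 this
      · exact h
    have hm_min : ∀ p ∈ Pim, ∀ i < sInf (hits p), (i : ℕ∞) ≤ p.len → p.vtx i ∉ VSet Q := by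
      intro p hp i hi hle hv
      exact absurd (Nat.sInf_le (show i ∈ hits p from ⟨hle, hv⟩)) (by omega)
    have hy_inj : ∀ p ∈ Pim, ∀ p' ∈ Pim,
        p.vtx (sInf (hits p)) = p'.vtx (sInf (hits p')) → p = p' := by
      intro p hp p' hp' he
      refine eq_of_mem_support hPdisj (hPimP p hp) (hPimP p' hp')
        (vtx_mem_support (hm_mem p hp).1) ?_
      rw [he]
      exact vtx_mem_support (hm_mem p' hp').1
    have hfiber : ∀ q : DiWalk V, {p ∈ Pim | qp p = q}.Finite := by
      intro q
      refine Set.Finite.of_finite_image (f := fun p => p.vtx (sInf (hits p))) ?_ ?_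
      · by_cases hne : {p ∈ Pim | qp p = q}.Nonempty
        · obtain ⟨p0, hp0⟩ := hne
          have hqQ : q ∈ Q := hp0.2 ▸ hqp p0 hp0.1
          refine (support_finite (q_notRay hQ hqQ)).subset ?_
          rintro v ⟨p, hp, rfl⟩
          show p.vtx (sInf (hits p)) ∈ q.support
          rw [← hrp2 p hp.1, ← hp.2]
          exact vtx_mem_support (hrp1 p hp.1)
        · rw [Set.not_nonempty_iff_eq_empty] at hne
          rw [hne]
          simp
      · intro p hp p' hp' he
        exact hy_inj p hp.1 p' hp'.1 he
    have himg : (qp '' Pim).Infinite := by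
      by_contra h
      rw [Set.not_infinite] at h
      refine hinf (Set.Finite.subset (Set.Finite.biUnion h (fun q _ => hfiber q)) ?_)
      intro p hp
      exact Set.mem_biUnion (Set.mem_image_of_mem qp hp) ⟨hp, rfl⟩
    have hsel : ∀ q ∈ qp '' Pim, ∃ p, p ∈ Pim ∧ qp p = q := by
      rintro q ⟨p, hp, he⟩
      exact ⟨p, hp, he⟩
    choose! sel hsel1 hsel2 using hsel
    set Psel : Set (DiWalk V) := sel '' (qp '' Pim) with hPsel
    have hPselsub : Psel ⊆ Pim := by
      rintro _ ⟨q, hq, rfl⟩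
      exact hsel1 q hq
    have hPselinf : Psel.Infinite := by
      refine Set.Infinite.image ?_ himg
      intro q hq q' hq' he
      rw [← hsel2 q hq, ← hsel2 q' hq', he]
    have hqp_inj : ∀ p ∈ Psel, ∀ p' ∈ Psel, qp p = qp p' → p = p' := by
      rintro _ ⟨q, hq, rfl⟩ _ ⟨q', hq', rfl⟩ he
      rw [hsel2 q hq, hsel2 q' hq'] at he
      rw [he]
    have hrpb : ∀ p ∈ Pim, rp p ≤ (qp p).len.toNat := by
      intro p hp
      have h1 := hrp1 p hp
      rw [q_len hQ (hqp p hp)] at h1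
      exact_mod_cast h1
    -- the teeth
    set tooth : DiWalk V → DiWalk V := fun p =>
      ⟨fun j => if j ≤ sInf (hits p) then p.vtx j
          else (qp p).vtx (rp p + (j - sInf (hits p))),
        ((sInf (hits p) + ((qp p).len.toNat - rp p) : ℕ) : ℕ∞)⟩ with htooth
    have htoothA : ∀ p : DiWalk V, ∀ j ≤ sInf (hits p), (tooth p).vtx j = p.vtx j := by
      intro p j hj
      exact if_pos hj
    have htoothB : ∀ p ∈ Pim, ∀ j : ℕ, sInf (hits p) ≤ j →
        (tooth p).vtx j = (qp p).vtx (rp p + (j - sInf (hits p))) := by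
      intro p hp j hj
      rcases eq_or_lt_of_le hj with he | hlt
      · rw [← he, htoothA p _ le_rfl, show sInf (hits p) - sInf (hits p) = 0 by omega,
          Nat.add_zero]
        exact (hrp2 p hp).symm
      · exact if_neg (by omega)
    have htoothIni : ∀ p : DiWalk V, (tooth p).Ini = p.Ini := by
      intro p
      exact htoothA p 0 (Nat.zero_le _)
    have htooth_len : ∀ p : DiWalk V,
        (tooth p).len = ((sInf (hits p) + ((qp p).len.toNat - rp p) : ℕ) : ℕ∞) := fun _ => rfl
    -- support decomposition of a tooth
    have hdecomp : ∀ p ∈ Pim, ∀ v ∈ (tooth p).support,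
        (v ∈ p.support ∧ (v ∉ VSet Q ∨ v = p.vtx (sInf (hits p)))) ∨
          (v ∈ (qp p).support ∧ v ∈ VSet Q) := by
      rintro p hp v ⟨j, hjle, rfl⟩
      rw [htooth_len p, Nat.cast_le] at hjle
      by_cases hjm : j ≤ sInf (hits p)
      · left
        rw [htoothA p j hjm]
        refine ⟨vtx_mem_support (le_trans (by exact_mod_cast hjm) (hm_mem p hp).1), ?_⟩
        rcases eq_or_lt_of_le hjm with he | hlt
        · right
          rw [he]
        · left
          exact hm_min p hp j hlt (le_trans (by exact_mod_cast (le_of_lt hlt)) (hm_mem p hp).1)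
      · right
        have hbound : rp p + (j - sInf (hits p)) ≤ ((qp p).len.toNat) := by
          have := hrpb p hp
          omega
        have hboundE : ((rp p + (j - sInf (hits p)) : ℕ) : ℕ∞) ≤ (qp p).len := by
          rw [q_len hQ (hqp p hp)]
          exact_mod_cast hbound
        rw [htoothB p hp j (by omega)]
        exact ⟨vtx_mem_support hboundE, mem_VSet_iff.2 ⟨qp p, hqp p hp, vtx_mem_support hboundE⟩⟩
    have hy_mem : ∀ p ∈ Pim, p.vtx (sInf (hits p)) ∈ (qp p).support := by
      intro p hp
      rw [← hrp2 p hp]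
      exact vtx_mem_support (hrp1 p hp)
    refine ⟨Rt, hRtpath, hRtray, tooth '' Psel, ?_, ?_, ?_⟩
    · -- infinite
      refine Set.Infinite.image ?_ hPselinf
      intro p hp p' hp' he
      have h0 : p.Ini = p'.Ini := by
        rw [← htoothIni p, ← htoothIni p', he]
      refine eq_of_mem_support hPdisj (hPimP p (hPselsub hp)) (hPimP p' (hPselsub hp'))
        (Ini_mem_support p) ?_
      rw [h0]
      exact Ini_mem_support p'
    · -- each tooth is good
      rintro t ⟨p, hpsel, rfl⟩
      have hpim : p ∈ Pim := hPselsub hpsel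
      have hpP : p ∈ P := hPimP p hpim
      have hpP' : p ∈ P' := hpim.1
      obtain ⟨ppath, pray, plen1, pIniR, pTer, pmeet0⟩ := hPgood p hpP
      have hq_p : qp p ∈ Q := hqp p hpim
      have hmm := hm_mem p hpim
      have hm1 := hm_pos p hpim
      have hrb := hrpb p hpim
      refine ⟨⟨?_, ?_⟩, ?_, ?_, ?_, ?_, ?_⟩
      · -- edges
        intro i hi
        rw [htooth_len p] at hi
        have hi' : i + 1 ≤ sInf (hits p) + ((qp p).len.toNat - rp p) := by exact_mod_cast hi
        by_cases him : i + 1 ≤ sInf (hits p)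
        · rw [htoothA p i (by omega), htoothA p (i+1) him]
          refine D1_step_out (ppath.1 i ?_) (hm_min p hpim i (by omega) ?_)
          · calc (i:ℕ∞) + 1 = ((i+1 : ℕ) : ℕ∞) := by push_cast; ring
              _ ≤ ((sInf (hits p) : ℕ) : ℕ∞) := by exact_mod_cast him
              _ ≤ p.len := hmm.1
          · exact le_trans (by exact_mod_cast (by omega : i ≤ sInf (hits p))) hmm.1
        · rw [htoothB p hpim i (by omega), htoothB p hpim (i+1) (by omega)]
          rw [show rp p + (i + 1 - sInf (hits p)) = (rp p + (i - sInf (hits p))) + 1 by omega]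
          refine (hQ.1.1 (qp p) hq_p).1 _ ?_
          rw [q_len hQ hq_p]
          have : rp p + (i - sInf (hits p)) + 1 ≤ (qp p).len.toNat := by omega
          exact_mod_cast this
      · -- injectivity
        intro i j hi hj he
        rw [htooth_len p] at hi hj
        have hi' : i ≤ sInf (hits p) + ((qp p).len.toNat - rp p) := by exact_mod_cast hi
        have hj' : j ≤ sInf (hits p) + ((qp p).len.toNat - rp p) := by exact_mod_cast hj
        have hyq : ∀ k : ℕ, ¬ k ≤ sInf (hits p) →
            k ≤ sInf (hits p) + ((qp p).len.toNat - rp p) →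
            ((rp p + (k - sInf (hits p)) : ℕ) : ℕ∞) ≤ (qp p).len := by
          intro k hk hk2
          rw [q_len hQ hq_p]
          exact_mod_cast by omega
        by_cases him : i ≤ sInf (hits p) <;> by_cases hjm : j ≤ sInf (hits p)
        · rw [htoothA p i him, htoothA p j hjm] at he
          exact ppath.2 i j (le_trans (by exact_mod_cast him) hmm.1)
            (le_trans (by exact_mod_cast hjm) hmm.1) he
        · exfalso
          rw [htoothA p i him, htoothB p hpim j (by omega)] at he
          rcases eq_or_lt_of_le him with hei | hlt
          · rw [hei, ← hrp2 p hpim] at he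
            have := (hQ.1.1 (qp p) hq_p).2 _ _ (hrp1 p hpim) (hyq j hjm hj') he
            omega
          · refine hm_min p hpim i hlt
              (le_trans (by exact_mod_cast le_of_lt hlt) hmm.1) ?_
            rw [he]
            exact mem_VSet_iff.2 ⟨qp p, hq_p, vtx_mem_support (hyq j hjm hj')⟩
        · exfalso
          rw [htoothA p j hjm, htoothB p hpim i (by omega)] at he
          rcases eq_or_lt_of_le hjm with hej | hlt
          · rw [hej, ← hrp2 p hpim] at he
            have := (hQ.1.1 (qp p) hq_p).2 _ _ (hyq i him hi') (hrp1 p hpim) he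
            omega
          · refine hm_min p hpim j hlt
              (le_trans (by exact_mod_cast le_of_lt hlt) hmm.1) ?_
            rw [← he]
            exact mem_VSet_iff.2 ⟨qp p, hq_p, vtx_mem_support (hyq i him hi')⟩
        · rw [htoothB p hpim i (by omega), htoothB p hpim j (by omega)] at he
          have := (hQ.1.1 (qp p) hq_p).2 _ _ (hyq i him hi') (hyq j hjm hj') he
          omega
      · -- not a ray
        show ¬ _ = ⊤
        rw [htooth_len p]
        exact ENat.coe_ne_top _
      · -- length at least one
        rw [htooth_len p]
        exact_mod_cast by omega
      · -- Ini on the tail ray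
        rw [htoothIni p]
        exact hP'Ini p hpP'
      · -- Ter in B0
        have hT : (tooth p).Ter =
            (qp p).vtx (rp p + ((sInf (hits p) + ((qp p).len.toNat - rp p)) - sInf (hits p))) := by
          show (tooth p).vtx ((tooth p).len.toNat) = _
          rw [show (tooth p).len.toNat = sInf (hits p) + ((qp p).len.toNat - rp p) by
            rw [htooth_len p]; exact ENat.toNat_coe _]
          exact htoothB p hpim _ (by omega)
        rw [hT, show rp p + ((sInf (hits p) + ((qp p).len.toNat - rp p)) - sInf (hits p))
          = (qp p).len.toNat by omega]
        exact q_Ter_mem_B0 hQ hq_p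
      · -- meets the ray only at its initial vertex
        refine Set.eq_singleton_iff_unique_mem.2 ⟨⟨Ini_mem_support _, ?_⟩, ?_⟩
        · rw [htoothIni p]
          exact hP'Ini p hpP'
        · rintro v ⟨hvt, hvRt⟩
          rcases hdecomp p hpim v hvt with ⟨hvp, -⟩ | ⟨-, hvVQ⟩
          · have := hmeet p hpP ⟨hvp, hvRt⟩
            rw [htoothIni p]
            exact this
          · exact absurd hvVQ (hRt_VQ v hvRt)
    · -- teeth pairwise disjoint
      rintro t ⟨p, hp, rfl⟩ t' ⟨p', hp', rfl⟩ hne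
      have hpim := hPselsub hp
      have hpim' := hPselsub hp'
      have hpp' : p ≠ p' := fun h => hne (by rw [h])
      have hqpne : qp p ≠ qp p' := fun h => hpp' (hqp_inj p hp p' hp' h)
      have hQd := hQ.1.2 (qp p) (hqp p hpim) (qp p') (hqp p' hpim') hqpne
      have hPd := hPdisj p (hPimP p hpim) p' (hPimP p' hpim') hpp'
      rw [Set.disjoint_left]
      intro v hv hv'
      rcases hdecomp p hpim v hv with ⟨hvp, hside⟩ | ⟨hvq, hvVQ⟩
      · rcases hdecomp p' hpim' v hv' with ⟨hvp', -⟩ | ⟨hvq', hvVQ'⟩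
        · exact hPd.ne_of_mem hvp hvp' rfl
        · rcases hside with hnVQ | hy
          · exact hnVQ hvVQ'
          · refine hQd.ne_of_mem ?_ hvq' rfl
            rw [hy]
            exact hy_mem p hpim
      · rcases hdecomp p' hpim' v hv' with ⟨hvp', hside'⟩ | ⟨hvq', -⟩
        · rcases hside' with hnVQ | hy
          · exact hnVQ hvVQ
          · refine hQd.ne_of_mem hvq ?_ rfl
            rw [hy]
            exact hy_mem p' hpim'
        · exact hQd.ne_of_mem hvq hvq' rfl

end Shift
namespace Shift

variable {V : Type*} {D : V → V → Prop} {B0 : Set V} {Q : Set (DiWalk V)}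

lemma D1_sink_S (hQ : IsLinkage D B0 Q) {s u : V} (hs : s ∈ IniSet Q) :
    ¬ shiftedDigraph D (ESet Q) (VSet Q) s u := by
  rintro (h | ⟨v, hvD, hvn, hv⟩)
  · exact EQ_head_ne_ini hQ h hs
  · rcases hv with ⟨hvnVQ, rfl⟩ | hvs
    · exact hvnVQ (Ini_sub_VQ hs)
    · exact EQ_head_ne_ini hQ hvs hs

/-- The shifted dimaze of a CO-free dimaze along a linkage `Q` whose initial set cannot
be linked to a proper subset of its terminal set is again CO-free. -/
theorem co1 (hDim : IsDimaze D B0) (hQ : IsLinkage D B0 Q) (hCO : COFree D B0)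
    (hmin : ¬ ∃ Q', IsLinkage D B0 Q' ∧ IniSet Q' = IniSet Q ∧ TerSet Q' ⊂ TerSet Q) :
    COFree (shiftedDigraph D (ESet Q) (VSet Q)) ((B0 \ TerSet Q) ∪ IniSet Q) := by
  classical
  rintro ⟨R, hRpath, hRray, P, hPinf, hPgood, hPdisj⟩
  set C : Comp V := ⟨D, B0, Q, {R}, hDim, hQ, hCO,
    (by rintro π rfl; exact hRpath),
    (by rintro p rfl q rfl hne; exact absurd rfl hne),
    (by rintro π rfl hnr; exact absurd hRray hnr)⟩ with hC
  have hRmem : R ∈ C.P1 := rfl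
  have hRstep : ∀ n : ℕ, C.Pstep (R.vtx n) (R.vtx (n+1)) := by
    intro n
    exact ⟨R, hRmem, n, by rw [hRray]; exact le_top, rfl, rfl⟩
  have hPstepR : ∀ {a u : V}, C.Pstep a u → ∃ j : ℕ, R.vtx j = a ∧ R.vtx (j+1) = u := by
    rintro a u ⟨π, hπ, j, hj, ha, hu⟩
    rw [Set.mem_singleton_iff] at hπ
    subst hπ
    exact ⟨j, ha, hu⟩
  have hR_inj : ∀ i j : ℕ, R.vtx i = R.vtx j → i = j := by
    intro i j he
    exact hRpath.2 i j (by rw [hRray]; exact le_top) (by rw [hRray]; exact le_top) he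
  -- R never visits the initial vertices of Q
  have hno_into_S : ∀ s ∈ IniSet Q, ¬ ∃ b, C.Pstep b s := by
    rintro s hs ⟨b, hb⟩
    obtain ⟨j, -, hj2⟩ := hPstepR hb
    have hD1 := (hRstep (j+1)).D1
    rw [hj2] at hD1
    exact D1_sink_S hQ hs hD1
  have hNoIn_S : ∀ s ∈ IniSet Q, C.NoIn s := by
    rintro s hs ⟨x, harc⟩
    rcases harc with ⟨hEQ, -⟩ | ⟨-, -, b, hst, -⟩
    · exact EQ_head_ne_ini hQ hEQ hs
    · exact hno_into_S s hs ⟨b, hst.1⟩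
  have hInt_S : ∀ s ∈ IniSet Q, C.Internal s := by
    intro s hs
    refine Or.inl ⟨Ini_sub_VQ hs, ?_⟩
    rintro ⟨b, hb⟩
    exact hno_into_S s hs ⟨b, hb.1⟩
  have hno_into_r0 : ¬ ∃ b, C.Pstep b R.Ini := by
    rintro ⟨b, hb⟩
    obtain ⟨j, -, hj2⟩ := hPstepR hb
    have := hR_inj (j+1) 0 hj2
    omega
  have hNoIn_r0 : C.NoIn R.Ini := by
    rintro ⟨x, harc⟩
    rcases harc with ⟨hEQ, hnoOut⟩ | ⟨-, -, b, hst, -⟩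
    · exact hnoOut ⟨R.vtx 1, hRstep 0⟩
    · exact hno_into_r0 ⟨b, hst.1⟩
  have hInt_r0 : C.Internal R.Ini := by
    by_cases h : R.Ini ∈ VSet Q
    · refine Or.inl ⟨h, ?_⟩
      rintro ⟨b, hb⟩
      exact hno_into_r0 ⟨b, hb.1⟩
    · exact Or.inr ⟨h, R.vtx 1, hRstep 0⟩
  -- sources
  have hsrc : ∀ a : V, (a ∈ IniSet Q ∨ a = R.Ini) → C.NoIn a ∧ C.Internal a := by
    rintro a (ha | rfl)
    · exact ⟨hNoIn_S a ha, hInt_S a ha⟩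
    · exact ⟨hNoIn_r0, hInt_r0⟩
  -- all trajectories from sources are finite
  have hfin : ∀ a : V, (a ∈ IniSet Q ∨ a = R.Ini) → ∃ n, C.o a n = none := by
    intro a ha
    by_contra h
    push_neg at h
    obtain ⟨π, hπ, -, j0, htail⟩ := Comp.escape h (hsrc a ha).1
    rw [Set.mem_singleton_iff] at hπ
    subst hπ
    obtain ⟨W, hW⟩ := tail_spine hDim hQ ⟨hRpath, hRray, P, hPinf, hPgood, hPdisj⟩ htail
    exact hCO ⟨W, hW⟩
  -- all trajectories end in TerSet Q
  have hter : ∀ a : V, ∀ ha : (a ∈ IniSet Q ∨ a = R.Ini),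
      (Comp.trajW (hfin a ha)).Ter ∈ TerSet Q := by
    intro a ha
    rcases Comp.trajW_Ter_stop (hfin a ha) with ⟨hInt, hno⟩ | hnInt
    · exact C.stop_internal hInt hno
    · by_cases h0 : Comp.tlen (hfin a ha) = 0
      · rw [C.tlen0_Ter (hfin a ha) h0] at hnInt
        exact absurd (hsrc a ha).2 hnInt
      · obtain ⟨-, π, hπ, hnr, -⟩ :=
          C.stop_noInternal (Comp.trajW_Ter_reached (hfin a ha) h0) hnInt
        rw [Set.mem_singleton_iff] at hπ
        subst hπ
        exact absurd hRray hnr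
  -- R.Ini is not an initial vertex of Q
  have hr0S : R.Ini ∉ IniSet Q := by
    intro h
    exact D1_sink_S hQ h (hRstep 0).D1
  -- the linkage violating minimality
  refine hmin ⟨{w | ∃ s : V, ∃ hs : s ∈ IniSet Q, w = Comp.trajW (hfin s (Or.inl hs))},
    ⟨⟨?_, ?_⟩, ?_⟩, ?_, ?_⟩
  · rintro w ⟨s, hs, rfl⟩
    exact Comp.trajW_path _ (hNoIn_S s hs)
  · rintro w ⟨s, hs, rfl⟩ w' ⟨s', hs', rfl⟩ hne
    by_cases h : s = s'
    · subst h
      exact absurd rfl hne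
    · exact Comp.trajW_disjoint (hNoIn_S s hs) (hNoIn_S s' hs') h _ _
  · rintro w ⟨s, hs, rfl⟩
    exact ⟨Comp.trajW_notRay _, TerSet_sub_B0 hQ (hter s (Or.inl hs))⟩
  · apply Set.eq_of_subset_of_subset
    · rintro v ⟨w, ⟨s, hs, rfl⟩, rfl⟩
      rw [Comp.trajW_Ini]
      exact hs
    · rintro v hv
      exact ⟨Comp.trajW (hfin v (Or.inl hv)), ⟨v, hv, rfl⟩, Comp.trajW_Ini _⟩
  · have hsub : TerSet {w | ∃ s : V, ∃ hs : s ∈ IniSet Q,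
        w = Comp.trajW (hfin s (Or.inl hs))} ⊆ TerSet Q := by
      rintro v ⟨w, ⟨s, hs, rfl⟩, -, rfl⟩
      exact hter s (Or.inl hs)
    refine (Set.ssubset_iff_of_subset hsub).2
      ⟨(Comp.trajW (hfin R.Ini (Or.inr rfl))).Ter, hter R.Ini (Or.inr rfl), ?_⟩
    rintro ⟨w, ⟨s, hs, rfl⟩, -, hTer⟩
    have hd := Comp.trajW_disjoint (hNoIn_S s hs) hNoIn_r0
      (fun h => hr0S (h ▸ hs)) (hfin s (Or.inl hs)) (hfin R.Ini (Or.inr rfl))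
    refine hd.ne_of_mem (Ter_mem_support (Comp.trajW_notRay _))
      (Ter_mem_support (Comp.trajW_notRay _)) hTer

end Shift
namespace Shift

variable {V : Type*} {D : V → V → Prop} {B0 : Set V} {Q : Set (DiWalk V)}

/-- Lemma B: a linkable set of the shifted dimaze is linkable in `(D, B0)`. -/
theorem linkB (hDim : IsDimaze D B0) (hQ : IsLinkage D B0 Q) (hCO : COFree D B0) {I : Set V}
    (h : Linkable (shiftedDigraph D (ESet Q) (VSet Q)) ((B0 \ TerSet Q) ∪ IniSet Q) I) :
    Linkable D B0 I := by
  obtain ⟨P1, ⟨⟨hp, hd⟩, hf⟩, hIni⟩ := h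
  have := Comp.linkable_of_noRay
    ⟨D, B0, Q, P1, hDim, hQ, hCO, hp, hd, fun π hπ _ => (hf π hπ).2⟩
    (fun π hπ => (hf π hπ).1)
  rw [show IniSet P1 = I from hIni] at this
  exact this

/-! ### Reversal of the linkage -/

/-- The reversal of a finite walk. -/
noncomputable def rev (q : DiWalk V) : DiWalk V :=
  ⟨fun j => q.vtx (q.len.toNat - j), (q.len.toNat : ℕ∞)⟩

section Rev

lemma rev_len (q : DiWalk V) : (rev q).len = (q.len.toNat : ℕ∞) := rfl

lemma rev_support (hQ : IsLinkage D B0 Q) {q : DiWalk V} (hq : q ∈ Q) :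
    (rev q).support = q.support := by
  apply Set.eq_of_subset_of_subset
  · rintro v ⟨j, hj, rfl⟩
    rw [rev_len] at hj
    have hj' : j ≤ q.len.toNat := by exact_mod_cast hj
    refine ⟨q.len.toNat - j, ?_, rfl⟩
    rw [q_len hQ hq]
    exact_mod_cast Nat.sub_le _ _
  · rintro v ⟨i, hi, rfl⟩
    rw [q_len hQ hq] at hi
    have hi' : i ≤ q.len.toNat := by exact_mod_cast hi
    refine ⟨q.len.toNat - i, ?_, ?_⟩
    · rw [rev_len]
      exact_mod_cast Nat.sub_le _ _
    · show q.vtx (q.len.toNat - (q.len.toNat - i)) = q.vtx i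
      rw [show q.len.toNat - (q.len.toNat - i) = i by omega]

lemma rev_Ini (q : DiWalk V) : (rev q).Ini = q.Ter := by
  show q.vtx (q.len.toNat - 0) = q.vtx (q.len.toNat)
  rw [Nat.sub_zero]

lemma rev_notRay (q : DiWalk V) : ¬ (rev q).IsRay := by
  show ¬ _ = ⊤
  rw [rev_len]
  exact ENat.coe_ne_top _

lemma rev_Ter (q : DiWalk V) : (rev q).Ter = q.Ini := by
  show (rev q).vtx ((rev q).len.toNat) = q.vtx 0
  rw [show (rev q).len.toNat = q.len.toNat from ENat.toNat_coe _]
  show q.vtx (q.len.toNat - q.len.toNat) = q.vtx 0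
  rw [Nat.sub_self]

lemma rev_path (hQ : IsLinkage D B0 Q) {q : DiWalk V} (hq : q ∈ Q) :
    (rev q).IsPathIn (shiftedDigraph D (ESet Q) (VSet Q)) := by
  constructor
  · intro j hj
    rw [rev_len] at hj
    have hj' : j + 1 ≤ q.len.toNat := by exact_mod_cast hj
    refine Or.inl (mem_ESet_iff.2 ⟨q, hq, q.len.toNat - j - 1, ?_, ?_⟩)
    · rw [q_len hQ hq]
      exact_mod_cast (by omega : q.len.toNat - j - 1 + 1 ≤ q.len.toNat)
    · show (q.vtx (q.len.toNat - (j+1)), q.vtx (q.len.toNat - j)) = _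
      simp only [Prod.mk.injEq]
      exact ⟨congrArg q.vtx (by omega), congrArg q.vtx (by omega)⟩
  · intro i j hi hj he
    rw [rev_len] at hi hj
    have hi' : i ≤ q.len.toNat := by exact_mod_cast hi
    have hj' : j ≤ q.len.toNat := by exact_mod_cast hj
    have := (hQ.1.1 q hq).2 (q.len.toNat - i) (q.len.toNat - j) ?_ ?_ he
    · omega
    · rw [q_len hQ hq]; exact_mod_cast Nat.sub_le _ _
    · rw [q_len hQ hq]; exact_mod_cast Nat.sub_le _ _

lemma revQ_linkage (hQ : IsLinkage D B0 Q) :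
    IsLinkage (shiftedDigraph D (ESet Q) (VSet Q))
    ((B0 \ TerSet Q) ∪ IniSet Q) (rev '' Q) := by
  refine ⟨⟨?_, ?_⟩, ?_⟩
  · rintro w ⟨q, hq, rfl⟩
    exact rev_path hQ hq
  · rintro w ⟨q, hq, rfl⟩ w' ⟨q', hq', rfl⟩ hne
    have hqq : q ≠ q' := fun h => hne (by rw [h])
    rw [rev_support hQ hq, rev_support hQ hq']
    exact hQ.1.2 q hq q' hq' hqq
  · rintro w ⟨q, hq, rfl⟩
    exact ⟨rev_notRay q, Or.inr (rev_Ter q ▸ ⟨q, hq, rfl⟩)⟩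

lemma revQ_Ini (hQ : IsLinkage D B0 Q) : IniSet (rev '' Q) = TerSet Q := by
  apply Set.eq_of_subset_of_subset
  · rintro v ⟨w, ⟨q, hq, rfl⟩, rfl⟩
    exact ⟨q, hq, q_notRay hQ hq, (rev_Ini q).symm⟩
  · rintro v ⟨q, hq, hnr, rfl⟩
    exact ⟨rev q, ⟨q, hq, rfl⟩, rev_Ini q⟩

lemma revQ_Ter : TerSet (rev '' Q) = IniSet Q := by
  apply Set.eq_of_subset_of_subset
  · rintro v ⟨w, ⟨q, hq, rfl⟩, -, rfl⟩
    exact ⟨q, hq, (rev_Ter q).symm⟩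
  · rintro v ⟨q, hq, rfl⟩
    exact ⟨rev q, ⟨q, hq, rfl⟩, rev_notRay q, rev_Ter q⟩

lemma revQ_VSet (hQ : IsLinkage D B0 Q) : VSet (rev '' Q) = VSet Q := by
  apply Set.eq_of_subset_of_subset
  · rintro v hv
    obtain ⟨w, ⟨q, hq, rfl⟩, hsup⟩ := mem_VSet_iff.1 hv
    exact mem_VSet_iff.2 ⟨q, hq, rev_support hQ hq ▸ hsup⟩
  · rintro v hv
    obtain ⟨q, hq, hsup⟩ := mem_VSet_iff.1 hv
    exact mem_VSet_iff.2 ⟨rev q, ⟨q, hq, rfl⟩, (rev_support hQ hq).symm ▸ hsup⟩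

lemma revQ_ESet (hQ : IsLinkage D B0 Q) {a b : V} :
    (a, b) ∈ ESet (rev '' Q) ↔ (b, a) ∈ ESet Q := by
  constructor
  · intro h
    obtain ⟨w, hw, i, hi, he⟩ := mem_ESet_iff.1 h
    obtain ⟨q, hq, rfl⟩ := hw
    rw [rev_len] at hi
    have hi' : i + 1 ≤ q.len.toNat := by exact_mod_cast hi
    simp only [Prod.mk.injEq] at he
    obtain ⟨ha, hb⟩ := he
    refine mem_ESet_iff.2 ⟨q, hq, q.len.toNat - i - 1, ?_, ?_⟩
    · rw [q_len hQ hq]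
      exact_mod_cast (by omega : q.len.toNat - i - 1 + 1 ≤ q.len.toNat)
    · simp only [Prod.mk.injEq]
      constructor
      · rw [hb]
        show q.vtx (q.len.toNat - (i+1)) = _
        exact congrArg q.vtx (by omega)
      · rw [ha]
        show q.vtx (q.len.toNat - i) = _
        exact congrArg q.vtx (by omega)
  · intro h
    obtain ⟨q, hq, i, hi, he⟩ := mem_ESet_iff.1 h
    have hi2 : i + 1 ≤ q.len.toNat := by
      rw [q_len hQ hq] at hi
      exact_mod_cast hi
    simp only [Prod.mk.injEq] at he
    obtain ⟨hb, ha⟩ := he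
    refine mem_ESet_iff.2 ⟨rev q, ⟨q, hq, rfl⟩, q.len.toNat - i - 1, ?_, ?_⟩
    · rw [rev_len]
      exact_mod_cast (by omega : q.len.toNat - i - 1 + 1 ≤ q.len.toNat)
    · simp only [Prod.mk.injEq]
      constructor
      · rw [ha]
        show _ = q.vtx (q.len.toNat - (q.len.toNat - i - 1))
        exact congrArg q.vtx (by omega)
      · rw [hb]
        show _ = q.vtx (q.len.toNat - ((q.len.toNat - i - 1) + 1))
        exact congrArg q.vtx (by omega)

end Rev

/-- The shift along the reversed linkage undoes the shift (off the diagonal). -/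
lemma shift_invol (hDim : IsDimaze D B0) (hQ : IsLinkage D B0 Q) {a u : V} (hne : a ≠ u) :
    shiftedDigraph (shiftedDigraph D (ESet Q) (VSet Q)) (ESet (rev '' Q)) (VSet (rev '' Q))
      a u ↔ D a u := by
  rw [show VSet (rev '' Q) = VSet Q from revQ_VSet hQ]
  constructor
  · rintro (h | ⟨v, hD1, hvu, hv⟩)
    · exact EQ_sub_D hQ ((revQ_ESet hQ).1 h)
    · rw [revQ_ESet hQ] at hvu
      rcases hD1 with huv | ⟨w, hwD, hwu, hw⟩
      · exact absurd huv hvu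
      · rcases hv with ⟨hvn, rfl⟩ | hva
        · rcases hw with ⟨hwn, rfl⟩ | hwv
          · exact hwD
          · exact absurd (EQ_head_VQ hwv) hvn
        · rw [revQ_ESet hQ] at hva
          rcases hw with ⟨hwn, rfl⟩ | hwv
          · exact absurd (EQ_head_VQ hva) hwn
          · obtain rfl := EQ_funHead hQ hwv hva
            exact hwD
  · intro hD
    by_cases hEQ : (a, u) ∈ ESet Q
    · exact Or.inl ((revQ_ESet hQ).2 hEQ)
    · by_cases hVQ : a ∈ VSet Q
      · by_cases hT : a ∈ TerSet Q
        · exact absurd hD (hDim a (TerSet_sub_B0 hQ hT) u)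
        · obtain ⟨b, hb⟩ := exists_succ hQ hVQ hT
          refine Or.inr ⟨b, Or.inr ⟨a, hD, hEQ, Or.inr hb⟩, ?_, Or.inr ((revQ_ESet hQ).2 hb)⟩
          rw [revQ_ESet hQ]
          intro hub
          obtain rfl := EQ_funHead hQ hub hb
          exact hne rfl
      · refine Or.inr ⟨a, Or.inr ⟨a, hD, hEQ, Or.inl ⟨hVQ, rfl⟩⟩, ?_, Or.inl ⟨hVQ, rfl⟩⟩
        rw [revQ_ESet hQ]
        intro hua
        exact hVQ (EQ_head_VQ hua)

/-- Linkability only depends on the digraph off the diagonal. -/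
lemma linkable_congr {D D' : V → V → Prop} (h : ∀ a u, a ≠ u → (D a u ↔ D' a u))
    {B I : Set V} (hl : Linkable D B I) : Linkable D' B I := by
  obtain ⟨P, ⟨⟨hp, hd⟩, hf⟩, hIni⟩ := hl
  refine ⟨P, ⟨⟨?_, hd⟩, hf⟩, hIni⟩
  intro w hw
  refine ⟨?_, (hp w hw).2⟩
  intro i hi
  have hne : w.vtx i ≠ w.vtx (i + 1) := by
    intro he
    have := (hp w hw).2 i (i+1) (cast_le_of_succ hi) (cast_succ_le hi) he
    omega
  exact (h _ _ hne).1 ((hp w hw).1 i hi)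

/-- Undoing the exit set modification. -/
lemma B1_invol (hDim : IsDimaze D B0) (hQ : IsLinkage D B0 Q) :
    ((((B0 \ TerSet Q) ∪ IniSet Q) \ IniSet Q) ∪ TerSet Q) = B0 := by
  apply Set.eq_of_subset_of_subset
  · rintro v (⟨hv1 | hv2, hns⟩ | ht)
    · exact hv1.1
    · exact absurd hv2 hns
    · exact TerSet_sub_B0 hQ ht
  · intro b hb
    by_cases hT : b ∈ TerSet Q
    · exact Or.inr hT
    · refine Or.inl ⟨Or.inl ⟨hb, hT⟩, ?_⟩
      intro hS
      exact hT (VQ_B0_sub_T hDim hQ (Ini_sub_VQ hS) hb)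

end Shift

namespace Shift

variable {V : Type*} {D : V → V → Prop} {B0 : Set V} {Q : Set (DiWalk V)}

/-- The shifted dimaze is a dimaze. -/
lemma shiftDim (hDim : IsDimaze D B0) (hQ : IsLinkage D B0 Q) :
    IsDimaze (shiftedDigraph D (ESet Q) (VSet Q)) ((B0 \ TerSet Q) ∪ IniSet Q) := by
  intro b hb u hD1
  rcases hb with ⟨hbB0, hbT⟩ | hbS
  · rcases hD1 with h | ⟨v, hvD, hvn, hv⟩
    · exact hbT (VQ_B0_sub_T hDim hQ (EQ_head_VQ h) hbB0)
    · rcases hv with ⟨-, rfl⟩ | hvb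
      · exact hDim b hbB0 u hvD
      · exact hbT (VQ_B0_sub_T hDim hQ (EQ_head_VQ hvb) hbB0)
  · exact D1_sink_S hQ hbS hD1

end Shift

theorem shifted_dimaze_same_gammoid {V : Type*} (D : V → V → Prop) (B0 : Set V)
    (hDim : IsDimaze D B0) (M : Matroid V) (hE : M.E = Set.univ)
    (hInd : ∀ I, M.Indep I ↔ Linkable D B0 I) (hCO : COFree D B0)
    (Q : Set (DiWalk V)) (S T : Set V) (hQ : IsLinkage D B0 Q)
    (hS : IniSet Q = S) (hT : TerSet Q = T)
    (hmin : ¬ ∃ Q', IsLinkage D B0 Q' ∧ IniSet Q' = S ∧ TerSet Q' ⊂ T) :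
    ∀ I, Linkable D B0 I ↔
      Linkable (shiftedDigraph D (ESet Q) (VSet Q)) ((B0 \ T) ∪ S) I := by
  classical
  subst hS
  subst hT
  intro I
  constructor
  · intro h
    have hDim1 := Shift.shiftDim hDim hQ
    have hQ1 := Shift.revQ_linkage hQ
    have hCO1 := Shift.co1 hDim hQ hCO hmin
    refine Shift.linkB hDim1 hQ1 hCO1 ?_
    rw [Shift.revQ_Ter, Shift.revQ_Ini hQ, Shift.B1_invol hDim hQ]
    exact Shift.linkable_congr (fun a u hne => (Shift.shift_invol hDim hQ hne).symm) h
  · exact fun h => Shift.linkB hDim hQ hCO h
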